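/- arXiv:2112.14880 — 9 statements merged into one kernel-verified Lean document; each statement's English description precedes it below -/
import Mathlib

section
/- Let G be a finite group, let p and q be distinct primes, let H be a subgroup of G of index p, and let N be a subgroup of G contained in H such that N is normal in H, N has index q in H, and the normal core of N in G is trivial. Then the normal core K of H in G is an elementary abelian q-group: K is commutative, every element k of K satisfies k^q = 1, and the order of K divides q^p. -/
/-- Let `G` be a finite group, `p` and `q` distinct primes, `H` a subgroup of index `p`,
and `N ≤ H` normal in `H` of index `q` in `H` with trivial normal core in `G`.
Then the normal core `K` of `H` in `G` is an elementary abelian `q`-group: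
`K` is commutative, every `k ∈ K` satisfies `k ^ q = 1`, and `|K|` divides `q ^ p`. -/
theorem stmt_0 {G : Type*} [Group G] [Finite G] (p q : ℕ)
    (hp : p.Prime) (hq : q.Prime) (hpq : p ≠ q)
    (H N : Subgroup G) (hHp : H.index = p)
    (hNH : N ≤ H) (hNnorm : (N.subgroupOf H).Normal)
    (hNq : N.relIndex H = q) (hNcore : N.normalCore = ⊥) :
    (∀ a b : G, a ∈ H.normalCore → b ∈ H.normalCore → a * b = b * a) ∧
    (∀ k : G, k ∈ H.normalCore → k ^ q = 1) ∧
    Nat.card H.normalCore ∣ q ^ p := by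
  haveI : Fact q.Prime := ⟨hq⟩
  -- the quotient group H / N
  let Q := H ⧸ N.subgroupOf H
  have hcardQ : Nat.card Q = q := hNq
  haveI : IsCyclic Q := isCyclic_of_prime_card hcardQ
  have hcomm : ∀ x y : Q, x * y = y * x := fun x y =>
    (IsCyclic.commGroup (α := Q)).mul_comm x y
  -- membership in the normal core
  have hmem : ∀ k : G, k ∈ H.normalCore → ∀ g : G, g⁻¹ * k * g ∈ H := by
    intro k hk g
    have := hk g⁻¹
    simpa using this
  -- the embedding K →* (G ⧸ H) → Q
  have wd : ∀ (k : H.normalCore) (a b : G), (QuotientGroup.leftRel H).r a b →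
      (QuotientGroup.mk ⟨a⁻¹ * (k : G) * a, hmem k k.2 a⟩ : Q) =
      QuotientGroup.mk ⟨b⁻¹ * (k : G) * b, hmem k k.2 b⟩ := by
    intro k a b hab
    have hab' : a⁻¹ * b ∈ H := (QuotientGroup.leftRel_apply).mp hab
    set x : H := ⟨a⁻¹ * (k : G) * a, hmem k k.2 a⟩
    set h : H := ⟨a⁻¹ * b, hab'⟩
    have hxy : (⟨b⁻¹ * (k : G) * b, hmem k k.2 b⟩ : H) = h⁻¹ * x * h := by
      ext
      simp only [x, h, Subgroup.coe_mul, Subgroup.coe_inv, mul_inv_rev, inv_inv]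
      group
    rw [hxy]
    have : (QuotientGroup.mk (h⁻¹ * x * h) : Q) =
        (QuotientGroup.mk h)⁻¹ * QuotientGroup.mk x * QuotientGroup.mk h := by
      simp [QuotientGroup.mk_mul, QuotientGroup.mk_inv]
    rw [this, hcomm _ (QuotientGroup.mk h), ← mul_assoc]
    simp
  let f : H.normalCore →* (G ⧸ H) → Q :=
  { toFun := fun k => Quotient.lift
      (fun g => (QuotientGroup.mk ⟨g⁻¹ * (k : G) * g, hmem k k.2 g⟩ : Q)) (wd k)
    map_one' := by
      funext x
      refine Quotient.inductionOn x ?_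
      intro g
      show (QuotientGroup.mk _ : Q) = 1
      rw [QuotientGroup.eq_one_iff]
      convert (N.subgroupOf H).one_mem using 1
      ext
      simp
    map_mul' := by
      intro a b
      funext x
      refine Quotient.inductionOn x ?_
      intro g
      show (QuotientGroup.mk _ : Q) = QuotientGroup.mk _ * QuotientGroup.mk _
      rw [← QuotientGroup.mk_mul]
      congr 1
      ext
      simp only [Subgroup.coe_mul]
      group }
  have hinj : Function.Injective f := by
    rw [injective_iff_map_eq_one]
    intro k hk
    have hkN : (k : G) ∈ N.normalCore := by
      intro b
      have h1 := congrFun hk (QuotientGroup.mk b⁻¹)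
      rw [Pi.one_apply] at h1
      have h2 : (QuotientGroup.mk (⟨(b⁻¹)⁻¹ * (k : G) * b⁻¹, hmem k k.2 b⁻¹⟩ : H) : Q) = 1 := h1
      have h3 : (⟨(b⁻¹)⁻¹ * (k : G) * b⁻¹, hmem k k.2 b⁻¹⟩ : H) ∈ N.subgroupOf H :=
        (QuotientGroup.eq_one_iff _).mp h2
      simpa [Subgroup.mem_subgroupOf] using h3
    rw [hNcore, Subgroup.mem_bot] at hkN
    exact Subtype.ext hkN
  refine ⟨?_, ?_, ?_⟩
  · intro a b ha hb
    have := hinj (a₁ := ⟨a, ha⟩ * ⟨b, hb⟩) (a₂ := ⟨b, hb⟩ * ⟨a, ha⟩) ?_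
    · simpa [Subtype.ext_iff] using this
    · rw [map_mul, map_mul]
      funext x
      exact hcomm _ _
  · intro k hk
    have := hinj (a₁ := ⟨k, hk⟩ ^ q) (a₂ := 1) ?_
    · simpa [Subtype.ext_iff] using this
    · rw [map_pow, map_one]
      funext x
      have : (f ⟨k, hk⟩ x) ^ Nat.card Q = 1 := pow_card_eq_one'
      rw [hcardQ] at this
      simpa using this
  · have hdvd : Nat.card H.normalCore ∣ Nat.card ((G ⧸ H) → Q) :=
      Subgroup.card_dvd_of_injective f hinj
    rwa [Nat.card_fun, hcardQ, ← Subgroup.index, hHp] at hdvd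
end

section
/- Let p be a prime and let G be a finite group such that p² does not divide the order of G, G has a subgroup H of index p, and G is generated by its elements of order p. Let K be the normal core of H in G. Then the quotient group G/K is a simple group. -/
open scoped Pointwise


/-- Let `p` be a prime and `G` a finite group such that `p ^ 2` does not divide `|G|`,
`G` has a subgroup `H` of index `p`, and `G` is generated by its elements of order `p`.
Then `G ⧸ (normal core of H)` is a simple group. -/
theorem stmt_3 {G : Type*} [Group G] [Finite G] (p : ℕ) (hp : p.Prime)
    (hp2 : ¬ (p ^ 2 ∣ Nat.card G))
    (H : Subgroup G) (hHp : H.index = p)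
    (hgen : Subgroup.closure {g : G | orderOf g = p} = ⊤) :
    IsSimpleGroup (G ⧸ H.normalCore) := by
  haveI := Fact.mk hp
  set K := H.normalCore with hKdef
  have hKH : K ≤ H := H.normalCore_le
  have hpG : p ∣ Nat.card G := hHp ▸ H.index_dvd_card
  have hpH : ¬ p ∣ Nat.card H := by
    intro h
    exact hp2 (by rw [pow_two, ← H.card_mul_index, hHp]; exact Nat.mul_dvd_mul h dvd_rfl)
  have hpK : ¬ p ∣ Nat.card K := fun h => hpH (h.trans (Subgroup.card_dvd_of_le hKH))
  have hcardQ : Nat.card (G ⧸ K) = K.index := rfl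
  have hpQ : p ∣ Nat.card (G ⧸ K) := by
    rw [hcardQ]
    rcases hp.dvd_mul.mp (K.card_mul_index ▸ hpG) with h | h
    · exact absurd h hpK
    · exact h
  have hQdvd : Nat.card (G ⧸ K) ∣ Nat.card G := hcardQ ▸ K.index_dvd_card
  have hp2Q : ¬ p ^ 2 ∣ Nat.card (G ⧸ K) := fun h => hp2 (h.trans hQdvd)
  have hQpos : Nat.card (G ⧸ K) ≠ 0 := Nat.card_pos.ne'
  haveI : Nontrivial (G ⧸ K) := by
    rw [← Finite.one_lt_card_iff_nontrivial]
    exact lt_of_lt_of_le hp.one_lt (Nat.le_of_dvd Nat.card_pos hpQ)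
  have hfact : (Nat.card (G ⧸ K)).factorization p = 1 := by
    have h1 : 1 ≤ (Nat.card (G ⧸ K)).factorization p :=
      (Nat.Prime.pow_dvd_iff_le_factorization hp hQpos).mp (by simpa using hpQ)
    have h2 : ¬ 2 ≤ (Nat.card (G ⧸ K)).factorization p := fun h =>
      hp2Q ((Nat.Prime.pow_dvd_iff_le_factorization hp hQpos).mpr h)
    omega
  constructor
  intro N hN
  rcases eq_or_ne N ⊥ with hbot | hbot
  · exact Or.inl hbot
  right
  set M := N.comap (QuotientGroup.mk' K) with hMdef
  haveI hMn : M.Normal := hN.comap _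
  have hKM : K ≤ M := fun k hk => by
    have h1 : QuotientGroup.mk' K k = 1 := (QuotientGroup.eq_one_iff k).mpr hk
    show QuotientGroup.mk' K k ∈ N
    rw [h1]; exact N.one_mem
  have hMH : ¬ M ≤ H := by
    intro hle
    have hMK : M ≤ K := Subgroup.normal_le_normalCore.mpr hle
    apply hbot
    rw [eq_bot_iff]
    intro x hx
    obtain ⟨g, rfl⟩ := QuotientGroup.mk'_surjective K x
    have hg : g ∈ M := hx
    have : QuotientGroup.mk' K g = 1 := (QuotientGroup.eq_one_iff g).mpr (hMK hg)
    rw [this]; exact Subgroup.mem_bot.mpr rfl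
  have hsup : M ⊔ H = ⊤ := by
    have hle : H ≤ M ⊔ H := le_sup_right
    have hdvd : (M ⊔ H).index ∣ p := hHp ▸ Subgroup.index_dvd_of_le hle
    rcases (Nat.Prime.eq_one_or_self_of_dvd hp _ hdvd) with h1 | hps
    · exact Subgroup.index_eq_one.mp h1
    · exfalso
      have hmul := Subgroup.relIndex_mul_index hle
      rw [hps, hHp] at hmul
      have hr : H.relIndex (M ⊔ H) = 1 :=
        Nat.eq_of_mul_eq_mul_right hp.pos (hmul.trans (one_mul p).symm)
      exact hMH (le_sup_left.trans (Subgroup.relIndex_eq_one.mp hr))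
  have hsurj : Function.Surjective ((QuotientGroup.mk' M).comp H.subtype) := by
    rw [← MonoidHom.range_eq_top, MonoidHom.range_comp, Subgroup.range_subtype]
    apply Subgroup.comap_injective (QuotientGroup.mk'_surjective M)
    rw [Subgroup.comap_map_eq, QuotientGroup.ker_mk', Subgroup.comap_top, sup_comm, hsup]
  have hdvdH : Nat.card (G ⧸ M) ∣ Nat.card H := Subgroup.card_dvd_of_surjective _ hsurj
  have hpMidx : ¬ p ∣ M.index := fun h => hpH (h.trans hdvdH)
  have hpM : p ∣ Nat.card M := by
    rcases hp.dvd_mul.mp (M.card_mul_index ▸ hpG) with h | h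
    · exact h
    · exact absurd h hpMidx
  obtain ⟨x, hx⟩ := exists_prime_orderOf_dvd_card' p hpM
  set g : G := (x : G) with hg
  have hgord : orderOf g = p :=
    (orderOf_injective M.subtype Subtype.coe_injective x).trans hx
  set y : G ⧸ K := QuotientGroup.mk' K g with hy
  have hyN : y ∈ N := x.2
  have hgK : g ∉ K := by
    intro hgk
    have ho : orderOf (⟨g, hgk⟩ : K) = p :=
      (orderOf_injective K.subtype Subtype.coe_injective ⟨g, hgk⟩).symm.trans hgord
    exact hpK (ho ▸ orderOf_dvd_natCard (⟨g, hgk⟩ : K))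
  have hyord : orderOf y = p := by
    have hdvd : orderOf y ∣ p := hgord ▸ orderOf_map_dvd (QuotientGroup.mk' K) g
    rcases (Nat.Prime.eq_one_or_self_of_dvd hp _ hdvd) with h1 | h
    · exfalso
      have : y = 1 := orderOf_eq_one_iff.mp h1
      exact hgK ((QuotientGroup.eq_one_iff g).mp this)
    · exact h
  -- key: every element of order p of the quotient lies in N
  have key : ∀ z : G ⧸ K, orderOf z = p → z ∈ N := by
    intro z hz
    have hyP : IsPGroup p (Subgroup.zpowers y) :=
      IsPGroup.of_card (by rw [Nat.card_zpowers, hyord, pow_one])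
    have hzP : IsPGroup p (Subgroup.zpowers z) :=
      IsPGroup.of_card (by rw [Nat.card_zpowers, hz, pow_one])
    obtain ⟨P₀, hP₀⟩ := hyP.exists_le_sylow
    obtain ⟨P₁, hP₁⟩ := hzP.exists_le_sylow
    have hcardP₀ : Nat.card P₀ = p := by
      rw [Sylow.card_eq_multiplicity, hfact, pow_one]
    have hP₀eq : Subgroup.zpowers y = (P₀ : Subgroup (G ⧸ K)) :=
      Subgroup.eq_of_le_of_card_ge hP₀ (by rw [hcardP₀, Nat.card_zpowers, hyord])
    obtain ⟨c, hc⟩ := MulAction.exists_smul_eq (G ⧸ K) P₀ P₁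
    have hconj : (P₁ : Subgroup (G ⧸ K)) = MulAut.conj c • (P₀ : Subgroup (G ⧸ K)) := by
      rw [← hc]; rfl
    have hzmem : z ∈ MulAut.conj c • (Subgroup.zpowers y) := by
      rw [hP₀eq, ← hconj]
      exact hP₁ (Subgroup.mem_zpowers z)
    have hle : MulAut.conj c • (Subgroup.zpowers y) ≤ MulAut.conj c • N :=
      Subgroup.pointwise_smul_le_pointwise_smul_iff.mpr (Subgroup.zpowers_le.mpr hyN)
    have := hle hzmem
    rwa [Subgroup.Normal.conj_smul_eq_self] at this
  rw [eq_top_iff]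
  have htop : (⊤ : Subgroup (G ⧸ K)) =
      Subgroup.closure ((QuotientGroup.mk' K) '' {g : G | orderOf g = p}) := by
    rw [← MonoidHom.map_closure, hgen, Subgroup.map_top_of_surjective _
      (QuotientGroup.mk'_surjective K)]
  rw [htop]
  apply Subgroup.closure_le N |>.mpr
  rintro w ⟨a, ha, rfl⟩
  have hdvd : orderOf (QuotientGroup.mk' K a) ∣ p := ha ▸ orderOf_map_dvd (QuotientGroup.mk' K) a
  rcases (Nat.Prime.eq_one_or_self_of_dvd hp _ hdvd) with h1 | h
  · have : QuotientGroup.mk' K a = 1 := orderOf_eq_one_iff.mp h1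
    rw [this]; exact N.one_mem
  · exact key _ h
end

section
/- Let G be a finite group, let p and q be distinct primes, let H be a subgroup of G of index p, and let N be a subgroup of G contained in H such that N is normal in H, N has index q in H, and the normal core of N in G is trivial. Assume moreover that p² does not divide the order of G. Then there exist elements σ, τ of G such that: σ has order p, τ ∈ H, τ ∉ N, τ^q ∈ N, and every element g of G can be written in the form g = n · τ^a · σ^b with n ∈ N, 0 ≤ a ≤ q−1 and 0 ≤ b ≤ p−1. -/
/-- With the standing hypotheses on `G`, `H`, `N` and assuming `p ^ 2 ∤ |G|`,
there exist `σ, τ ∈ G` with `orderOf σ = p`, `τ ∈ H`, `τ ∉ N`, `τ ^ q ∈ N`, and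
every `g ∈ G` can be written `g = n * τ ^ a * σ ^ b` with `n ∈ N`,
`0 ≤ a ≤ q - 1` and `0 ≤ b ≤ p - 1`. -/
theorem stmt_5 {G : Type*} [Group G] [Finite G] (p q : ℕ)
    (hp : p.Prime) (hq : q.Prime) (hpq : p ≠ q)
    (H N : Subgroup G) (hHp : H.index = p)
    (hNH : N ≤ H) (hNnorm : (N.subgroupOf H).Normal)
    (hNq : N.relIndex H = q) (hNcore : N.normalCore = ⊥)
    (hp2 : ¬ (p ^ 2 ∣ Nat.card G)) :
    ∃ σ τ : G, orderOf σ = p ∧ τ ∈ H ∧ τ ∉ N ∧ τ ^ q ∈ N ∧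
      ∀ g : G, ∃ n ∈ N, ∃ a b : ℕ, a ≤ q - 1 ∧ b ≤ p - 1 ∧ g = n * τ ^ a * σ ^ b := by
  classical
  -- find σ of order p
  have hpdvd : p ∣ Nat.card G := hHp ▸ H.index_dvd_card
  haveI : Fact p.Prime := ⟨hp⟩
  obtain ⟨σ, hσ⟩ := exists_prime_orderOf_dvd_card' p hpdvd
  -- p does not divide |H|
  have hcard : Nat.card H * p = Nat.card G := by rw [← hHp]; exact H.card_mul_index
  have hpH : ¬ p ∣ Nat.card H := by
    intro hd
    exact hp2 (by rw [← hcard, pow_two]; exact mul_dvd_mul hd dvd_rfl)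
  -- H and ⟨σ⟩ are complements
  have hK : Nat.card (Subgroup.zpowers σ) = p := by rw [Nat.card_zpowers, hσ]
  have hcompl : Subgroup.IsComplement' H (Subgroup.zpowers σ) :=
    Subgroup.isComplement'_of_coprime (by rw [hK, hcard])
      (by rw [hK]; exact (hp.coprime_iff_not_dvd.mpr hpH).symm)
  -- set up the quotient H / (N.subgroupOf H)
  set N' : Subgroup H := N.subgroupOf H with hN'
  haveI : N'.Normal := hNnorm
  have hcardQ : Nat.card (H ⧸ N') = q := hNq
  -- find τ ∈ H \ N
  have hN'ne : N' ≠ ⊤ := by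
    intro htop
    have : N'.index = 1 := by rw [htop]; exact Subgroup.index_top
    rw [show N'.index = N.relIndex H from rfl, hNq] at this
    exact hq.one_lt.ne' this
  obtain ⟨τ', hτ'⟩ : ∃ τ' : H, τ' ∉ N' := by
    by_contra h
    push_neg at h
    exact hN'ne (Subgroup.eq_top_iff' N' |>.mpr h)
  set t : H ⧸ N' := QuotientGroup.mk τ' with ht
  have htne : t ≠ 1 := by
    rw [ht, Ne, QuotientGroup.eq_one_iff]
    exact hτ'
  have horder_t : orderOf t = q := by
    have hdvd : orderOf t ∣ q := hcardQ ▸ orderOf_dvd_natCard t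
    rcases (Nat.dvd_prime hq).mp hdvd with h1 | h1
    · exact absurd (orderOf_eq_one_iff.mp h1) htne
    · exact h1
  -- t generates the quotient
  have hzt : Subgroup.zpowers t = ⊤ := by
    apply Subgroup.eq_top_of_card_eq
    rw [Nat.card_zpowers, horder_t, hcardQ]
  -- τ properties
  have hτq : (τ' : G) ^ q ∈ N := by
    have : t ^ q = 1 := by rw [← horder_t]; exact pow_orderOf_eq_one t
    rw [ht, ← QuotientGroup.mk_pow, QuotientGroup.eq_one_iff] at this
    exact this
  have hτN : (τ' : G) ∉ N := fun h => hτ' (Subgroup.mem_subgroupOf.mpr h)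
  refine ⟨σ, (τ' : G), hσ, τ'.2, hτN, hτq, fun g => ?_⟩
  -- decompose g = h * σ^b
  obtain ⟨⟨h, k⟩, hhk⟩ := (hcompl.existsUnique g).exists
  obtain ⟨z, hz0⟩ := k.2
  have hz : σ ^ z = (k : G) := hz0
  -- b exponent
  set b : ℕ := (z % (p : ℤ)).toNat with hb
  have hple : (0 : ℤ) < (p : ℤ) := by exact_mod_cast hp.pos
  have hbz : (b : ℤ) = z % (p : ℤ) := Int.toNat_of_nonneg (Int.emod_nonneg z hple.ne')
  have hkb : (k : G) = σ ^ b := by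
    have : σ ^ (z % (p : ℤ)) = σ ^ z := by rw [← hσ] at *; exact zpow_mod_orderOf σ z
    rw [← hz, ← this, ← hbz, zpow_natCast]
  have hblt : b < p := by
    have := Int.emod_lt_of_pos z hple
    omega
  -- decompose h = n * τ^a using the quotient
  have hmem : (QuotientGroup.mk h : H ⧸ N') ∈ Subgroup.zpowers t := hzt ▸ Subgroup.mem_top _
  obtain ⟨w, hw0⟩ := hmem
  have hw : t ^ w = (QuotientGroup.mk h : H ⧸ N') := hw0
  set a : ℕ := (w % (q : ℤ)).toNat with ha
  have hqle : (0 : ℤ) < (q : ℤ) := by exact_mod_cast hq.pos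
  have haz : (a : ℤ) = w % (q : ℤ) := Int.toNat_of_nonneg (Int.emod_nonneg w hqle.ne')
  have hta : t ^ a = QuotientGroup.mk h := by
    have h1 : t ^ (w % (q : ℤ)) = t ^ w := by
      rw [← horder_t]; exact zpow_mod_orderOf t w
    rw [← zpow_natCast, haz, h1, hw]
  have halt : a < q := by
    have := Int.emod_lt_of_pos w hqle
    omega
  -- from t^a = mk h : (τ'^a)⁻¹ * h ∈ N'
  have hx : (τ' ^ a)⁻¹ * h ∈ N' := by
    have : QuotientGroup.mk (τ' ^ a) = (QuotientGroup.mk h : H ⧸ N') := by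
      rw [QuotientGroup.mk_pow, ← ht, hta]
    exact (QuotientGroup.eq (s := N')).mp this
  -- conjugate to get h * (τ'^a)⁻¹ ∈ N'
  have hn' : h * (τ' ^ a)⁻¹ ∈ N' := by
    have hc : h * ((τ' ^ a)⁻¹ * h) * h⁻¹ ∈ N' :=
      Subgroup.Normal.conj_mem ‹N'.Normal› _ hx h
    have : h * ((τ' ^ a)⁻¹ * h) * h⁻¹ = h * (τ' ^ a)⁻¹ := by group
    rwa [this] at hc
  refine ⟨((h : G) * ((τ' : G) ^ a)⁻¹), ?_, a, b, by omega, by omega, ?_⟩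
  · have := Subgroup.mem_subgroupOf.mp hn'
    simpa using this
  · rw [← hhk, hkb]
    push_cast
    group
end

section
/- Let G be a finite group, let p and q be distinct primes, let H be a subgroup of G of index p, and let N be a subgroup of G contained in H such that N is normal in H, N has index q in H, and the normal core of N in G is trivial. Assume moreover that p² does not divide the order of G. Consider the action of G on the coset space G/N by left multiplication, and let π : G/N → G/H be the natural projection of coset spaces. Then there exists a permutation ε of G/N such that: ε has order q; ε commutes with the permutation of G/N induced by every element of G; π(ε(x)) = π(x) for every x ∈ G/N; and for any x, y ∈ G/N with π(x) = π(y) there exists an integer k with ε^k(x) = y. (Thus the orbits of ε are exactly the p fibers of π, each of size q.) -/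
section aux

variable {G : Type*} [Group G] {N : Subgroup G} {a : G}

/-- Right multiplication by an element of the normalizer of `N`, as a map on `G ⧸ N`. -/
def rmq (N : Subgroup G) (a : G) (ha : a ∈ (Subgroup.normalizer (N : Set G))) : G ⧸ N → G ⧸ N :=
  Quotient.map' (· * a) (fun g g' hgg' => by
    rw [QuotientGroup.leftRel_apply] at hgg' ⊢
    have := ((Subgroup.mem_normalizer_iff.mp (((Subgroup.normalizer (N : Set G))).inv_mem ha)) (g⁻¹ * g')).mp hgg'
    simpa [mul_assoc, mul_inv_rev] using this)

theorem rmq_mk (ha : a ∈ (Subgroup.normalizer (N : Set G))) (g : G) :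
    rmq N a ha (QuotientGroup.mk g) = QuotientGroup.mk (g * a) := rfl

/-- Right multiplication by an element of the normalizer of `N`, as a permutation of `G ⧸ N`. -/
def epsPerm (N : Subgroup G) (a : G) (ha : a ∈ (Subgroup.normalizer (N : Set G))) : Equiv.Perm (G ⧸ N) where
  toFun := rmq N a ha
  invFun := rmq N a⁻¹ (((Subgroup.normalizer (N : Set G))).inv_mem ha)
  left_inv := fun x => by
    induction x using QuotientGroup.induction_on
    simp [rmq_mk, mul_assoc]
  right_inv := fun x => by
    induction x using QuotientGroup.induction_on
    simp [rmq_mk, mul_assoc]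

theorem epsPerm_mk (ha : a ∈ (Subgroup.normalizer (N : Set G))) (g : G) :
    epsPerm N a ha (QuotientGroup.mk g) = QuotientGroup.mk (g * a) := rfl

theorem epsPerm_pow (ha : a ∈ (Subgroup.normalizer (N : Set G))) (n : ℕ) (g : G) :
    (epsPerm N a ha ^ n) (QuotientGroup.mk g) = QuotientGroup.mk (g * a ^ n) := by
  induction n with
  | zero => simp
  | succ n ih =>
    rw [pow_succ' (epsPerm N a ha) n, Equiv.Perm.mul_apply, ih, epsPerm_mk, pow_succ,
      mul_assoc]

theorem epsPerm_zpow (ha : a ∈ (Subgroup.normalizer (N : Set G))) (k : ℤ) (g : G) :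
    (epsPerm N a ha ^ k) (QuotientGroup.mk g) = QuotientGroup.mk (g * a ^ k) := by
  rcases k with n | n
  · simpa using epsPerm_pow ha n g
  · have h1 : (epsPerm N a ha ^ (n + 1)) (QuotientGroup.mk (g * a ^ (Int.negSucc n)))
        = QuotientGroup.mk g := by
      have he : Int.negSucc n + ((n + 1 : ℕ) : ℤ) = 0 := by
        rw [Int.negSucc_eq]; push_cast; ring
      rw [epsPerm_pow, mul_assoc, ← zpow_natCast a (n + 1), ← zpow_add, he, zpow_zero, mul_one]
    have h2 : epsPerm N a ha ^ (Int.negSucc n) = (epsPerm N a ha ^ (n + 1 : ℕ))⁻¹ := by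
      rw [← zpow_natCast, ← zpow_neg]
      norm_num [Int.negSucc_eq]
    rw [h2]
    apply Equiv.injective (epsPerm N a ha ^ (n + 1 : ℕ))
    rw [Equiv.Perm.inv_def, Equiv.apply_symm_apply]
    simpa using h1.symm

end aux

/-- With the standing hypotheses on `G`, `H`, `N` and assuming `p ^ 2 ∤ |G|`,
consider the left-multiplication action of `G` on the coset space `G ⧸ N` and let
`π : G ⧸ N → G ⧸ H` be the natural projection. Then there is a permutation `ε` of
`G ⧸ N` of order `q` commuting with the permutation induced by every `g ∈ G`,
preserving the fibers of `π`, and acting transitively on each fiber of `π`. -/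
theorem stmt_7 {G : Type*} [Group G] [Finite G] (p q : ℕ)
    (hp : p.Prime) (hq : q.Prime) (hpq : p ≠ q)
    (H N : Subgroup G) (hHp : H.index = p)
    (hNH : N ≤ H) (hNnorm : (N.subgroupOf H).Normal)
    (hNq : N.relIndex H = q) (hNcore : N.normalCore = ⊥)
    (hp2 : ¬ (p ^ 2 ∣ Nat.card G)) :
    ∃ ε : Equiv.Perm (G ⧸ N),
      orderOf ε = q ∧
      (∀ (g : G) (x : G ⧸ N), ε (g • x) = g • ε x) ∧
      (∀ x : G ⧸ N, Subgroup.quotientMapOfLE hNH (ε x) = Subgroup.quotientMapOfLE hNH x) ∧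
      (∀ x y : G ⧸ N, Subgroup.quotientMapOfLE hNH x = Subgroup.quotientMapOfLE hNH y →
        ∃ k : ℤ, (ε ^ k) x = y) := by
  classical
  haveI : Fact q.Prime := ⟨hq⟩
  -- pick a ∈ H \ N
  have hne : N.subgroupOf H ≠ ⊤ := by
    intro h
    rw [Subgroup.relIndex, h, Subgroup.index_top] at hNq
    exact hq.one_lt.ne (hNq.symm ▸ rfl)
  obtain ⟨x, hx⟩ : ∃ x : H, x ∉ N.subgroupOf H := by
    by_contra h
    push_neg at h
    exact hne ((Subgroup.eq_top_iff' _).mpr h)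
  set a : G := (x : G) with ha_def
  have haH : a ∈ H := x.2
  have haN : a ∉ N := fun h => hx (Subgroup.mem_subgroupOf.mpr h)
  -- a normalizes N
  have hnorm : a ∈ (Subgroup.normalizer (N : Set G)) := by
    rw [Subgroup.mem_normalizer_iff]
    intro n
    constructor
    · intro hn
      have := hNnorm.conj_mem ⟨n, hNH hn⟩ (Subgroup.mem_subgroupOf.mpr hn) x
      exact Subgroup.mem_subgroupOf.mp this
    · intro hn
      have := hNnorm.conj_mem ⟨a * n * a⁻¹, by
          have : n ∈ H := by
            have h1 : a * n * a⁻¹ ∈ H := hNH hn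
            have := H.mul_mem (H.mul_mem (H.inv_mem haH) h1) haH
            simpa [mul_assoc] using this
          exact hNH hn⟩ (Subgroup.mem_subgroupOf.mpr hn) x⁻¹
      have h2 := Subgroup.mem_subgroupOf.mp this
      simpa [mul_assoc, ha_def] using h2
  -- the quotient H ⧸ N.subgroupOf H has cardinality q and mk x generates it
  have hcardQ : Nat.card (H ⧸ N.subgroupOf H) = q := hNq
  have hmkx_ne : (QuotientGroup.mk x : H ⧸ N.subgroupOf H) ≠ 1 := by
    simpa [QuotientGroup.eq_one_iff] using hx
  have horder : orderOf (QuotientGroup.mk x : H ⧸ N.subgroupOf H) = q := by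
    have hdvd : orderOf (QuotientGroup.mk x : H ⧸ N.subgroupOf H) ∣ q := by
      rw [← hcardQ]; exact orderOf_dvd_natCard _
    rcases (Nat.Prime.eq_one_or_self_of_dvd hq _ hdvd) with h | h
    · exact absurd (orderOf_eq_one_iff.mp h) hmkx_ne
    · exact h
  have hgen : ∀ y : H ⧸ N.subgroupOf H, y ∈ Subgroup.zpowers (QuotientGroup.mk x) := by
    have : Subgroup.zpowers (QuotientGroup.mk x : H ⧸ N.subgroupOf H) = ⊤ := by
      apply Subgroup.eq_top_of_card_eq
      rw [Nat.card_zpowers, horder, hcardQ]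
    intro y; rw [this]; trivial
  -- a ^ q ∈ N
  have haq : a ^ q ∈ N := by
    have : (QuotientGroup.mk x : H ⧸ N.subgroupOf H) ^ q = 1 := by
      rw [← horder]; exact pow_orderOf_eq_one _
    rw [← QuotientGroup.mk_pow, QuotientGroup.eq_one_iff] at this
    have h2 := Subgroup.mem_subgroupOf.mp this
    simpa using h2
  refine ⟨epsPerm N a hnorm, ?_, ?_, ?_, ?_⟩
  · -- order q
    apply orderOf_eq_prime
    · ext z
      induction z using QuotientGroup.induction_on with
      | H g =>
        show (epsPerm N a hnorm ^ q) (QuotientGroup.mk g) = QuotientGroup.mk g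
        rw [epsPerm_pow]
        rw [QuotientGroup.eq]
        simpa [mul_assoc] using haq
    · intro h
      have : epsPerm N a hnorm (QuotientGroup.mk 1) = QuotientGroup.mk (1 : G) := by
        rw [h]; rfl
      rw [epsPerm_mk, one_mul, QuotientGroup.eq] at this
      exact haN (by simpa using this)
  · -- equivariance
    intro g z
    induction z using QuotientGroup.induction_on with
    | H g' =>
      have h1 : g • (QuotientGroup.mk g' : G ⧸ N) = QuotientGroup.mk (g * g') := rfl
      have h2 : g • (QuotientGroup.mk (g' * a) : G ⧸ N) = QuotientGroup.mk (g * (g' * a)) := rfl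
      rw [h1, epsPerm_mk, epsPerm_mk, h2, mul_assoc]
  · -- fibers preserved
    intro z
    induction z using QuotientGroup.induction_on with
    | H g =>
      rw [epsPerm_mk, Subgroup.quotientMapOfLE_apply_mk, Subgroup.quotientMapOfLE_apply_mk,
        QuotientGroup.eq]
      simpa [mul_assoc] using H.inv_mem haH
  · -- transitive on fibers
    intro z w hzw
    induction z using QuotientGroup.induction_on with
    | H g =>
      induction w using QuotientGroup.induction_on with
      | H g' =>
        rw [Subgroup.quotientMapOfLE_apply_mk, Subgroup.quotientMapOfLE_apply_mk,
          QuotientGroup.eq] at hzw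
        obtain ⟨k, hk⟩ := hgen (QuotientGroup.mk ⟨g⁻¹ * g', hzw⟩)
        refine ⟨k, ?_⟩
        rw [epsPerm_zpow, QuotientGroup.eq]
        have hk' : ((x ^ k)⁻¹ * ⟨g⁻¹ * g', hzw⟩ : H) ∈ N.subgroupOf H := by
          rw [← QuotientGroup.eq]
          simpa [QuotientGroup.mk_zpow] using hk
        have h2 := Subgroup.mem_subgroupOf.mp hk'
        simpa [mul_assoc, mul_inv_rev, ha_def] using h2
end

section
/- Let G be a finite group, let p and q be distinct primes with p odd, let H be a subgroup of G of index p, and let N be a subgroup of G contained in H such that N is normal in H, N has index q in H, and the normal core of N in G is trivial. Assume moreover that G is generated by its elements of order p. Then the order of the normal core K of H in G divides q^(p−1). -/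
open Subgroup MulAction

section TransferCore

variable {G : Type*} [Group G] {H : Subgroup G} {A : Type*} [CommGroup A]

lemma conj_mem_of_mem_normalCore {k : G} (hk : k ∈ H.normalCore) (b : G) :
    b⁻¹ * k * b ∈ H := by
  have : b⁻¹ * k * b⁻¹⁻¹ ∈ H.normalCore := H.normalCore_normal.conj_mem k hk b⁻¹
  simpa using H.normalCore_le this

lemma smul_quotient_eq_of_mem_normalCore {k : G} (hk : k ∈ H.normalCore) (x : G ⧸ H) :
    k • x = x := by
  induction x using QuotientGroup.induction_on with
  | H g =>
    show ((k * g : G) : G ⧸ H) = (g : G ⧸ H)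
    rw [QuotientGroup.eq]
    have : g⁻¹ * k⁻¹ * g ∈ H := conj_mem_of_mem_normalCore (H.normalCore.inv_mem hk) g
    simpa [mul_assoc] using this

/-- Transfer evaluated on an element of the normal core. -/
lemma transfer_normalCore_eq (ϕ : H →* A) [H.FiniteIndex] [Fintype (G ⧸ H)] {k : G}
    (hk : k ∈ H.normalCore) :
    ϕ.transfer k = ∏ x : G ⧸ H,
      ϕ ⟨x.out⁻¹ * k * x.out, conj_mem_of_mem_normalCore hk x.out⟩ := by
  classical
  have hfix := smul_quotient_eq_of_mem_normalCore hk
  have hfixz : ∀ (m : ℤ) (x : G ⧸ H), k ^ m • x = x := by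
    intro m x
    induction m using Int.induction_on with
    | zero => simp
    | succ i ih => rw [add_comm, zpow_add, zpow_one, mul_smul, ih, hfix]
    | pred i ih =>
      rw [sub_eq_add_neg, add_comm, zpow_add, mul_smul, ih, zpow_neg, zpow_one]
      calc k⁻¹ • x = k⁻¹ • (k • x) := by rw [hfix]
        _ = x := inv_smul_smul k x
  have horb : ∀ x y : G ⧸ H, x ∈ orbit (zpowers k) y → x = y := by
    intro x y h
    obtain ⟨⟨u, hu⟩, rfl⟩ := h
    obtain ⟨m, rfl⟩ := mem_zpowers_iff.mp hu
    exact hfixz m y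
  have hperiod : ∀ x : G ⧸ H, Function.minimalPeriod (k • ·) x = 1 :=
    fun x => Function.minimalPeriod_eq_one_iff_isFixedPt.mpr (hfix x)
  rw [MonoidHom.transfer_eq_prod_quotient_orbitRel_zpowers_quot ϕ k]
  have hbij : Function.Bijective
      (fun x : G ⧸ H => (Quotient.mk'' x : Quotient (orbitRel (↥(zpowers k)) (G ⧸ H)))) := by
    constructor
    · intro a b h
      exact horb a b (Quotient.exact' h)
    · exact Quotient.mk''_surjective
  set e : (G ⧸ H) ≃ Quotient (orbitRel (↥(zpowers k)) (G ⧸ H)) := Equiv.ofBijective _ hbij with he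
  rw [← e.prod_comp]
  refine Fintype.prod_congr _ _ fun x => ?_
  have hout : Quotient.out (e x) = x := by
    apply horb
    have h1 : (Quotient.mk'' (Quotient.out (e x)) :
        Quotient (orbitRel (↥(zpowers k)) (G ⧸ H))) = Quotient.mk'' x := by
      rw [Quotient.out_eq']
      rfl
    exact Quotient.exact' h1
  apply congrArg ϕ
  apply Subtype.ext
  show (Quotient.out (Quotient.out (e x)))⁻¹ * k ^ Function.minimalPeriod (k • ·) (Quotient.out (e x)) * Quotient.out (Quotient.out (e x))
      = x.out⁻¹ * k * x.out
  rw [hout, hperiod, pow_one]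

end TransferCore

/-- With the standing hypotheses on `G`, `H`, `N`, with `p` odd, and `G` generated by
its elements of order `p`, the order of the normal core `K` of `H` in `G`
divides `q ^ (p - 1)`. -/
theorem stmt_9 {G : Type*} [Group G] [Finite G] (p q : ℕ)
    (hp : p.Prime) (hq : q.Prime) (hpq : p ≠ q) (hodd : Odd p)
    (H N : Subgroup G) (hHp : H.index = p)
    (hNH : N ≤ H) (hNnorm : (N.subgroupOf H).Normal)
    (hNq : N.relIndex H = q) (hNcore : N.normalCore = ⊥)
    (hgen : Subgroup.closure {g : G | orderOf g = p} = ⊤) :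
    Nat.card H.normalCore ∣ q ^ (p - 1) := by
  classical
  haveI := hNnorm
  haveI : H.FiniteIndex := ⟨by rw [hHp]; exact hp.ne_zero⟩
  letI : Fintype (G ⧸ H) := Fintype.ofFinite _
  set A := H ⧸ N.subgroupOf H with hA
  have hcardA : Nat.card A = q := by
    rw [hA, ← Subgroup.index_eq_card, ← Subgroup.relIndex, hNq]
  haveI : Fact q.Prime := ⟨hq⟩
  haveI : IsCyclic A := isCyclic_of_prime_card hcardA
  letI : CommGroup A := IsCyclic.commGroup
  set ϕ : H →* A := QuotientGroup.mk' (N.subgroupOf H) with hϕ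
  -- the transfer is trivial since `G` is generated by elements of order `p`
  have hV : ∀ g : G, ϕ.transfer g = 1 := by
    intro g
    have hg : g ∈ Subgroup.closure {g : G | orderOf g = p} := by rw [hgen]; trivial
    induction hg using Subgroup.closure_induction with
    | mem z hz =>
      have h1 : (ϕ.transfer z) ^ p = 1 := by
        rw [← map_pow, ← hz, pow_orderOf_eq_one, map_one]
      have h2 : orderOf (ϕ.transfer z) ∣ p := orderOf_dvd_of_pow_eq_one h1
      have h3 : orderOf (ϕ.transfer z) ∣ q := hcardA ▸ orderOf_dvd_natCard _
      have h4 : orderOf (ϕ.transfer z) ∣ 1 :=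
        (Nat.coprime_primes hp hq).mpr hpq ▸ Nat.dvd_gcd h2 h3
      rw [← orderOf_eq_one_iff]
      exact Nat.dvd_one.mp h4
    | one => exact map_one _
    | mul a b _ _ ha hb => rw [map_mul, ha, hb, one_mul]
    | inv a _ ha => rw [map_inv, ha, inv_one]
  set K := H.normalCore with hKdef
  have memH : ∀ (x : G ⧸ H) (k : K), (x.out)⁻¹ * (k : G) * x.out ∈ H :=
    fun x k => conj_mem_of_mem_normalCore k.2 x.out
  have hprod : ∀ k : K, ∏ x : G ⧸ H, ϕ ⟨x.out⁻¹ * (k : G) * x.out, memH x k⟩ = 1 := by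
    intro k
    rw [← transfer_normalCore_eq ϕ k.2]
    exact hV k
  set x₀ : G ⧸ H := ((1 : G) : G ⧸ H) with hx₀
  set Ψ : K →* ({x : G ⧸ H // x ≠ x₀} → A) :=
    MonoidHom.mk' (fun k => fun x => ϕ ⟨(x : G ⧸ H).out⁻¹ * (k : G) * (x : G ⧸ H).out, memH x k⟩)
    (by
      intro a b
      funext x
      rw [Pi.mul_apply, ← map_mul]
      apply congrArg ϕ
      apply Subtype.ext
      push_cast
      group) with hΨ
  have hinj : Function.Injective Ψ := by
    rw [injective_iff_map_eq_one]
    intro k hk1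
    have hne : ∀ (x : G ⧸ H) (hx : x ≠ x₀),
        ϕ ⟨x.out⁻¹ * (k : G) * x.out, memH x k⟩ = 1 := fun x hx => congrFun hk1 ⟨x, hx⟩
    have hall : ∀ x : G ⧸ H, ϕ ⟨x.out⁻¹ * (k : G) * x.out, memH x k⟩ = 1 := by
      intro x
      by_cases h : x = x₀
      · subst h
        have h0 := hprod k
        rwa [Fintype.prod_eq_single x₀ (fun x hx => hne x hx)] at h0
      · exact hne x h
    have hallN : ∀ x : G ⧸ H, x.out⁻¹ * (k : G) * x.out ∈ N := by
      intro x
      have := (QuotientGroup.eq_one_iff _).mp (hall x)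
      exact Subgroup.mem_subgroupOf.mp this
    have hkN : (k : G) ∈ N.normalCore := by
      show ∀ b : G, b * (k : G) * b⁻¹ ∈ N
      intro b
      set x : G ⧸ H := ((b⁻¹ : G) : G ⧸ H) with hx
      set o : G := x.out with ho
      have hoH : o⁻¹ * b⁻¹ ∈ H := by
        rw [← QuotientGroup.eq]
        exact QuotientGroup.out_eq' x
      set hh : H := ⟨o⁻¹ * b⁻¹, hoH⟩ with hhh
      have hnN : o⁻¹ * (k : G) * o ∈ N := hallN x
      have hnH : o⁻¹ * (k : G) * o ∈ H := memH x k
      have hconj : (hh⁻¹ * ⟨o⁻¹ * (k : G) * o, hnH⟩ * hh⁻¹⁻¹ : H) ∈ N.subgroupOf H :=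
        hNnorm.conj_mem _ (Subgroup.mem_subgroupOf.mpr hnN) hh⁻¹
      have : ((hh⁻¹ * ⟨o⁻¹ * (k : G) * o, hnH⟩ * hh⁻¹⁻¹ : H) : G) ∈ N :=
        Subgroup.mem_subgroupOf.mp hconj
      have heq : ((hh⁻¹ * ⟨o⁻¹ * (k : G) * o, hnH⟩ * hh⁻¹⁻¹ : H) : G)
          = b * (k : G) * b⁻¹ := by
        push_cast [hhh]
        group
      rwa [heq] at this
    have : (k : G) ∈ (⊥ : Subgroup G) := hNcore ▸ hkN
    exact Subtype.ext (Subgroup.mem_bot.mp this)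
  have hdvd : Nat.card K ∣ Nat.card ({x : G ⧸ H // x ≠ x₀} → A) :=
    Subgroup.card_dvd_of_injective Ψ hinj
  have hcardsub : Nat.card {x : G ⧸ H // x ≠ x₀} = p - 1 := by
    rw [Nat.card_eq_fintype_card]
    have h1 : Fintype.card {x : G ⧸ H // x ≠ x₀} = Fintype.card (G ⧸ H) - Fintype.card {x : G ⧸ H // x = x₀} :=
      Fintype.card_subtype_compl _
    rw [h1, Fintype.card_subtype_eq, ← Nat.card_eq_fintype_card, ← Subgroup.index_eq_card, hHp]
  have hcardfun : Nat.card ({x : G ⧸ H // x ≠ x₀} → A) = q ^ (p - 1) := by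
    rw [Nat.card_fun, hcardA, hcardsub]
  rwa [hcardfun] at hdvd
end

section
/- Let G be a finite group, let p and q be distinct primes with p odd, let H be a subgroup of G of index p, and let N be a subgroup of G contained in H such that N is normal in H, N has index q in H, and the normal core of N in G is trivial. Assume moreover that G is generated by its elements of order p. Then G is solvable if and only if H is a normal subgroup of G. Moreover, if H is normal in G, then H equals the normal core of H in G, H is commutative with h^q = 1 for every h ∈ H, and for every Sylow p-subgroup P of G one has |P| = p, H ∩ P = {1} and H·P = G (so G is an internal semidirect product H ⋊ P). -/
open Subgroup
open scoped Pointwise commutatorElement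


lemma aux_fact_one {p m n : ℕ} (hp : p.Prime)
    (hcard : n = m * p) (hn : n ≠ 0) (hnd : ¬ p ∣ m) :
    n.factorization p = 1 := by
  have hm : m ≠ 0 := by rintro rfl; rw [zero_mul] at hcard; exact hn hcard
  rw [hcard, Nat.factorization_mul hm hp.ne_zero, Finsupp.add_apply,
    Nat.factorization_eq_zero_of_not_dvd hnd, Nat.Prime.factorization_self hp]

lemma aux_normal_of_solvable {G : Type*} [Group G] [Finite G] (p : ℕ) (hp : p.Prime)
    (H : Subgroup G) (hHp : H.index = p)
    (hgen : Subgroup.closure {g : G | orderOf g = p} = ⊤)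
    [hsolv : Group.IsSolvable G] : H.Normal := by
  classical
  haveI : Fact p.Prime := ⟨hp⟩
  set K := H.normalCore with hK
  haveI : K.Normal := H.normalCore_normal
  have hKH : K ≤ H := H.normalCore_le
  set π : G →* G ⧸ K := QuotientGroup.mk' K with hπ
  have hker : π.ker = K := QuotientGroup.ker_mk' K
  have hsurj : Function.Surjective π := QuotientGroup.mk'_surjective K
  set H' : Subgroup (G ⧸ K) := H.map π with hH'
  have hmem : ∀ x : G, π x ∈ H' ↔ x ∈ H := by
    intro x
    constructor
    · rintro ⟨h, hh, he⟩
      have : h⁻¹ * x ∈ π.ker := by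
        rw [MonoidHom.mem_ker, map_mul, map_inv, he, inv_mul_cancel]
      rw [hker] at this
      have := hKH this
      simpa using H.mul_mem hh this
    · exact fun hx => mem_map_of_mem π hx
  have hidx : H'.index = p := by
    rw [hH', H.index_map_eq hsurj (hker.le.trans hKH)]; exact hHp
  have hcoreH' : H'.normalCore = ⊥ := by
    rw [eq_bot_iff]
    intro y hy
    obtain ⟨x, rfl⟩ := hsurj y
    have hxK : x ∈ K := by
      rw [hK]
      intro b
      have := hy (π b)
      rw [← map_inv, ← map_mul, ← map_mul] at this
      exact (hmem _).mp this
    have : π x = 1 := by rw [← MonoidHom.mem_ker, hker]; exact hxK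
    simp [this]
  -- cardinality divides p!
  have hcardQ : Nat.card (G ⧸ K) = K.index := (K.index_eq_card).symm
  have hdvd_fact : Nat.card (G ⧸ K) ∣ Nat.factorial p := by
    have hfin : Fintype (G ⧸ H) := Fintype.ofFinite _
    set φ := MulAction.toPermHom G (G ⧸ H) with hφ
    have hKφ : K = φ.ker := H.normalCore_eq_ker
    have h1 : Nat.card (G ⧸ K) = Nat.card φ.range := by
      rw [hcardQ, hKφ, index_ker]
    have h2 : Nat.card φ.range ∣ Nat.card (Equiv.Perm (G ⧸ H)) :=
      Subgroup.card_subgroup_dvd_card _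
    have h3 : Nat.card (Equiv.Perm (G ⧸ H)) = Nat.factorial p := by
      rw [Nat.card_eq_fintype_card, Fintype.card_perm, ← Nat.card_eq_fintype_card,
        ← H.index_eq_card, hHp]
    rw [h1, ← h3]; exact h2
  have hppdvd : ¬ (p * p ∣ Nat.card (G ⧸ K)) := by
    intro hcon
    have h1 : p * p ∣ Nat.factorial p := hcon.trans hdvd_fact
    rw [← Nat.mul_factorial_pred hp.ne_zero] at h1
    have h2 : p ∣ Nat.factorial (p - 1) := (mul_dvd_mul_iff_left hp.ne_zero).mp h1
    have h3 := (Nat.Prime.dvd_factorial hp).mp h2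
    have := hp.two_le
    omega
  -- nontrivial
  have hidvd : H'.index ∣ Nat.card (G ⧸ K) := H'.index_dvd_card
  have hnt : Nontrivial (G ⧸ K) := by
    rw [← Finite.one_lt_card_iff_nontrivial]
    have := Nat.le_of_dvd Nat.card_pos (hidx ▸ hidvd)
    have := hp.two_le
    omega
  -- abelian normal nontrivial subgroup A
  have hex : ∃ n : ℕ, derivedSeries (G ⧸ K) n = ⊥ := Group.IsSolvable.solvable
  set n1 := Nat.find hex with hn1
  have hn1pos : n1 ≠ 0 := by
    intro h0
    have hbot : derivedSeries (G ⧸ K) 0 = ⊥ := h0 ▸ Nat.find_spec hex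
    rw [derivedSeries_zero] at hbot
    obtain ⟨x, y, hxy⟩ := hnt
    have hx : x ∈ (⊥ : Subgroup (G ⧸ K)) := hbot ▸ mem_top x
    have hy : y ∈ (⊥ : Subgroup (G ⧸ K)) := hbot ▸ mem_top y
    rw [mem_bot] at hx hy
    exact hxy (hx.trans hy.symm)
  set A := derivedSeries (G ⧸ K) (n1 - 1) with hA
  have hA_ne : A ≠ ⊥ := Nat.find_min hex (by omega)
  haveI hA_norm : A.Normal := derivedSeries_normal _ _
  have hA_ab : ∀ a b : G ⧸ K, a ∈ A → b ∈ A → a * b = b * a := by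
    intro a b ha hb
    have hsucc : derivedSeries (G ⧸ K) (n1 - 1 + 1) = ⊥ := by
      have : n1 - 1 + 1 = n1 := by omega
      rw [this]; exact Nat.find_spec hex
    rw [derivedSeries_succ] at hsucc
    have : ⁅a, b⁆ ∈ (⊥ : Subgroup (G ⧸ K)) := hsucc ▸ commutator_mem_commutator ha hb
    rw [mem_bot] at this
    exact commutatorElement_eq_one_iff_mul_comm.mp this
  have hA_nle : ¬ A ≤ H' := by
    intro hle
    exact hA_ne (le_bot_iff.mp (hcoreH' ▸ normal_le_normalCore.mpr hle))
  have hsup : A ⊔ H' = ⊤ := by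
    have hd : (A ⊔ H').index ∣ p := hidx ▸ index_dvd_of_le le_sup_right
    rcases (Nat.Prime.eq_one_or_self_of_dvd hp _ hd) with h1 | h1
    · exact index_eq_one.mp h1
    · exfalso
      have := relIndex_mul_index (le_sup_right : H' ≤ A ⊔ H')
      rw [h1, hidx] at this
      have hrel : H'.relIndex (A ⊔ H') = 1 := by
        have h2 : H'.relIndex (A ⊔ H') * p = 1 * p := by rw [one_mul]; exact this
        exact mul_right_cancel₀ hp.pos.ne' h2
      exact hA_nle (le_trans le_sup_left (relIndex_eq_one.mp hrel))
  have hinf : A ⊓ H' = ⊥ := by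
    rw [eq_bot_iff]
    rintro x ⟨hxA, hxH'⟩
    have hxcore : x ∈ H'.normalCore := by
      intro b
      have hb : b ∈ (A : Set (G ⧸ K)) * (H' : Set (G ⧸ K)) := by
        rw [← Subgroup.normal_mul, hsup]; trivial
      obtain ⟨a, ha, h, hh, rfl⟩ := hb
      have hy : h * x * h⁻¹ ∈ A := hA_norm.conj_mem x hxA h
      have hcomm : a * (h * x * h⁻¹) * a⁻¹ = h * x * h⁻¹ := by
        rw [hA_ab a _ ha hy, mul_assoc, mul_inv_cancel, mul_one]
      have heq : a * h * x * (a * h)⁻¹ = h * x * h⁻¹ := by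
        rw [mul_inv_rev, show a * h * x * (h⁻¹ * a⁻¹) = a * (h * x * h⁻¹) * a⁻¹ by group]
        exact hcomm
      rw [heq]
      exact H'.mul_mem (H'.mul_mem hh hxH') (H'.inv_mem hh)
    rw [hcoreH'] at hxcore
    exact hxcore
  have hcomp : IsComplement' A H' := by
    refine ⟨Subgroup.mul_injective_of_disjoint (disjoint_iff.mpr hinf), ?_⟩
    intro g
    have hg : g ∈ (A : Set (G ⧸ K)) * (H' : Set (G ⧸ K)) := by
      rw [← Subgroup.normal_mul, hsup]; trivial
    obtain ⟨a, ha, h, hh, rfl⟩ := hg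
    exact ⟨(⟨a, ha⟩, ⟨h, hh⟩), rfl⟩
  have hcardH'pos : Nat.card H' ≠ 0 := Nat.card_pos.ne'
  have hmulcard : Nat.card A * Nat.card H' = Nat.card (G ⧸ K) := hcomp.card_mul
  have hmi : Nat.card H' * H'.index = Nat.card (G ⧸ K) := card_mul_index H'
  have hcardA : Nat.card A = p := by
    rw [hidx] at hmi
    rw [← hmi, mul_comm (Nat.card H') p] at hmulcard
    exact Nat.eq_of_mul_eq_mul_right (Nat.pos_of_ne_zero hcardH'pos) hmulcard
  have hnd : ¬ p ∣ Nat.card H' := by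
    intro hd
    apply hppdvd
    rw [← hmi, hidx]
    exact mul_dvd_mul hd dvd_rfl
  have hfact1 : (Nat.card (G ⧸ K)).factorization p = 1 :=
    aux_fact_one hp (by rw [← hmi, hidx]) Nat.card_pos.ne' hnd
  have hSylCard : ∀ P : Sylow p (G ⧸ K), Nat.card P = p := by
    intro P
    rw [Sylow.card_eq_multiplicity, hfact1, pow_one]
  have hApg : IsPGroup p A := IsPGroup.of_card (by rw [hcardA, pow_one])
  obtain ⟨P0, hle⟩ := hApg.exists_le_sylow
  have hA_eq : A = (P0 : Subgroup (G ⧸ K)) :=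
    Subgroup.eq_of_le_of_card_ge hle (by rw [hSylCard P0, hcardA])
  have helt : ∀ y : G ⧸ K, orderOf y = p → y ∈ A := by
    intro y hy
    have hz : IsPGroup p (zpowers y) := IsPGroup.of_card (by rw [Nat.card_zpowers, hy, pow_one])
    obtain ⟨Q, hQ⟩ := hz.exists_le_sylow
    obtain ⟨x, hx⟩ := MulAction.exists_smul_eq (G ⧸ K) Q P0
    have hyQ : y ∈ (Q : Set (G ⧸ K)) := hQ (mem_zpowers y)
    have h1 : x * y * x⁻¹ ∈ ((x • Q : Sylow p (G ⧸ K)) : Set (G ⧸ K)) := by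
      rw [Sylow.coe_smul]
      exact ⟨y, hyQ, rfl⟩
    rw [hx] at h1
    have h2 : x * y * x⁻¹ ∈ A := by rw [hA_eq]; exact h1
    have h3 := hA_norm.conj_mem _ h2 x⁻¹
    simpa [mul_assoc] using h3
  have htop : (⊤ : Subgroup (G ⧸ K)) ≤ A := by
    have h1 : Subgroup.map π ⊤ = ⊤ := by
      rw [eq_top_iff]
      intro y _
      obtain ⟨x, rfl⟩ := hsurj y
      exact ⟨x, mem_top x, rfl⟩
    calc (⊤ : Subgroup (G ⧸ K)) = Subgroup.map π ⊤ := h1.symm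
      _ = Subgroup.map π (Subgroup.closure {g : G | orderOf g = p}) := by rw [hgen]
      _ = Subgroup.closure (π '' {g : G | orderOf g = p}) := MonoidHom.map_closure π _
      _ ≤ A := by
          rw [Subgroup.closure_le]
          rintro y ⟨x, hx, rfl⟩
          have hdvd : orderOf (π x) ∣ p := hx ▸ orderOf_map_dvd π x
          rcases (Nat.Prime.eq_one_or_self_of_dvd hp _ hdvd) with h1 | h1
          · rw [orderOf_eq_one_iff.mp h1]; exact A.one_mem
          · exact helt _ h1
  have hAtop : A = ⊤ := top_le_iff.mp htop
  have hcardH'1 : Nat.card H' = 1 := by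
    have hcardtop : Nat.card A = Nat.card (G ⧸ K) := by
      rw [hAtop]; exact Subgroup.card_top
    rw [hcardtop] at hmulcard
    conv_rhs at hmulcard => rw [← mul_one (Nat.card (G ⧸ K))]
    exact mul_left_cancel₀ Nat.card_pos.ne' hmulcard
  have hH'bot : H' = ⊥ := card_eq_one.mp hcardH'1
  have hHK : H ≤ K := by
    intro h hh
    have : π h ∈ H' := mem_map_of_mem π hh
    rw [hH'bot, mem_bot] at this
    rw [← hker, MonoidHom.mem_ker]
    exact this
  have : H.normalCore = H := le_antisymm hKH hHK
  exact this ▸ H.normalCore_normal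


section auxmain
variable {G : Type*} [Group G] [Finite G]

-- commutators and q-th powers of elements of H lie in N
lemma aux_in_N (q : ℕ) (hq : q.Prime) (H N : Subgroup G)
    (hNH : N ≤ H) (hNnorm : (N.subgroupOf H).Normal) (hNq : N.relIndex H = q) :
    (∀ a b : G, a ∈ H → b ∈ H → a * b * a⁻¹ * b⁻¹ ∈ N) ∧
    (∀ a : G, a ∈ H → a ^ q ∈ N) := by
  classical
  haveI : Fact q.Prime := ⟨hq⟩
  set N' : Subgroup H := N.subgroupOf H with hN'
  have hcard : Nat.card (H ⧸ N') = q := by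
    rw [← index_eq_card]; exact hNq
  haveI : IsCyclic (H ⧸ N') := isCyclic_of_prime_card hcard
  letI : CommGroup (H ⧸ N') := IsCyclic.commGroup
  set ρ : H →* H ⧸ N' := QuotientGroup.mk' N' with hρ
  have hmem : ∀ x : H, ρ x = 1 ↔ (x : G) ∈ N := by
    intro x
    rw [hρ, QuotientGroup.mk'_apply, QuotientGroup.eq_one_iff]
    exact Iff.rfl
  constructor
  · intro a b ha hb
    have := (hmem (⟨a, ha⟩ * ⟨b, hb⟩ * ⟨a, ha⟩⁻¹ * ⟨b, hb⟩⁻¹)).mp ?_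
    · exact this
    · rw [map_mul, map_mul, map_mul, map_inv, map_inv]
      rw [mul_comm (ρ ⟨a, ha⟩) (ρ ⟨b, hb⟩)]
      group
  · intro a ha
    have := (hmem (⟨a, ha⟩ ^ q)).mp ?_
    · exact this
    · rw [map_pow, ← hcard, pow_card_eq_one']

lemma aux_comm_pow (q : ℕ) (hq : q.Prime) (H N : Subgroup G)
    (hNH : N ≤ H) (hNnorm : (N.subgroupOf H).Normal) (hNq : N.relIndex H = q)
    (hNcore : N.normalCore = ⊥) (hH : H.Normal) :
    (∀ a b : G, a ∈ H → b ∈ H → a * b = b * a) ∧ (∀ h : G, h ∈ H → h ^ q = 1) := by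
  obtain ⟨hc, hpow⟩ := aux_in_N q hq H N hNH hNnorm hNq
  constructor
  · intro a b ha hb
    have hx : a * b * a⁻¹ * b⁻¹ ∈ N.normalCore := by
      intro g
      have h1 : g * (a * b * a⁻¹ * b⁻¹) * g⁻¹ =
          (g * a * g⁻¹) * (g * b * g⁻¹) * (g * a * g⁻¹)⁻¹ * (g * b * g⁻¹)⁻¹ := by group
      rw [h1]
      exact hc _ _ (hH.conj_mem a ha g) (hH.conj_mem b hb g)
    rw [hNcore, mem_bot] at hx
    exact commutatorElement_eq_one_iff_mul_comm.mp (by rw [commutatorElement_def]; exact hx)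
  · intro h hh
    have hx : h ^ q ∈ N.normalCore := by
      intro g
      have h1 : g * h ^ q * g⁻¹ = (g * h * g⁻¹) ^ q := by
        rw [conj_pow]
      rw [h1]
      exact hpow _ (hH.conj_mem h hh g)
    rw [hNcore, mem_bot] at hx
    exact hx
end auxmain


-- backward: H normal, H commutative, index p prime => solvable
lemma aux_solvable {G : Type*} [Group G] [Finite G] (p : ℕ) (hp : p.Prime)
    (H : Subgroup G) (hHp : H.index = p) (hH : H.Normal)
    (hcomm : ∀ a b : G, a ∈ H → b ∈ H → a * b = b * a) : IsSolvable G := by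
  haveI : Fact p.Prime := ⟨hp⟩
  haveI : Group.IsSolvable H := isSolvable_of_comm (fun a b => by
    ext1
    exact hcomm a b a.2 b.2)
  have hcard : Nat.card (G ⧸ H) = p := by rw [← index_eq_card]; exact hHp
  haveI : IsCyclic (G ⧸ H) := isCyclic_of_prime_card hcard
  letI : CommGroup (G ⧸ H) := IsCyclic.commGroup
  haveI : Group.IsSolvable (G ⧸ H) := isSolvable_of_comm (fun a b => mul_comm a b)
  refine solvable_of_ker_le_range H.subtype (QuotientGroup.mk' H) ?_
  rw [QuotientGroup.ker_mk', Subgroup.subtype_range]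

lemma aux_sylow {G : Type*} [Group G] [Finite G] (p q : ℕ)
    (hp : p.Prime) (hq : q.Prime) (hpq : p ≠ q)
    (H : Subgroup G) (hHp : H.index = p)
    (hpow : ∀ h : G, h ∈ H → h ^ q = 1) (P : Sylow p G) :
    Nat.card P = p ∧ H ⊓ (P : Subgroup G) = ⊥ ∧
      ∀ g : G, ∃ h ∈ H, ∃ x ∈ (P : Subgroup G), g = h * x := by
  classical
  haveI : Fact p.Prime := ⟨hp⟩
  have hndvd : ¬ p ∣ Nat.card H := by
    intro hd
    obtain ⟨h, hh⟩ := exists_prime_orderOf_dvd_card' (G := H) p hd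
    have h1 : orderOf (h : G) = p := by
      rw [← hh]
      exact (orderOf_injective H.subtype Subtype.coe_injective h).symm ▸ rfl
    have h2 : (h : G) ^ q = 1 := hpow h h.2
    have h3 : p ∣ q := h1 ▸ orderOf_dvd_of_pow_eq_one h2
    exact hpq ((Nat.prime_dvd_prime_iff_eq hp hq).mp h3)
  have hmi : Nat.card H * p = Nat.card G := by rw [← hHp]; exact card_mul_index H
  have hfact1 : (Nat.card G).factorization p = 1 := by
    have hm : Nat.card H ≠ 0 := Nat.card_pos.ne'
    rw [← hmi, Nat.factorization_mul hm hp.ne_zero, Finsupp.add_apply,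
      Nat.factorization_eq_zero_of_not_dvd hndvd, Nat.Prime.factorization_self hp]
  have hcardP : Nat.card P = p := by
    rw [Sylow.card_eq_multiplicity, hfact1, pow_one]
  refine ⟨hcardP, ?_, ?_⟩
  · rw [eq_bot_iff]
    rintro x ⟨hxH, hxP⟩
    obtain ⟨k, hk⟩ := P.2 ⟨x, hxP⟩
    have hk' : x ^ (p ^ k) = 1 := by
      have := congrArg (Subtype.val) hk
      simpa using this
    have h1 : orderOf x ∣ p ^ k := orderOf_dvd_of_pow_eq_one hk'
    have h2 : orderOf x ∣ q := orderOf_dvd_of_pow_eq_one (hpow x hxH)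
    have hco : Nat.Coprime (p ^ k) q :=
      Nat.Coprime.pow_left k ((Nat.coprime_primes hp hq).mpr hpq)
    have : orderOf x ∣ 1 := (Nat.dvd_gcd h1 h2).trans hco.gcd_eq_one.dvd
    rw [mem_bot, ← orderOf_eq_one_iff]
    exact Nat.dvd_one.mp this
  · have hcm : Nat.card H * Nat.card P = Nat.card G := by rw [hcardP]; exact hmi
    have hco : Nat.Coprime (Nat.card H) (Nat.card P) := by
      rw [hcardP]
      exact Nat.Coprime.symm (hp.coprime_iff_not_dvd.mpr hndvd)
    have hcomp : IsComplement' H P := isComplement'_of_coprime hcm hco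
    intro g
    obtain ⟨⟨h, x⟩, hx⟩ := hcomp.2 g
    exact ⟨h, h.2, x, x.2, hx.symm⟩

/-- With the standing hypotheses on `G`, `H`, `N`, with `p` odd, and `G` generated by its
elements of order `p`: `G` is solvable iff `H` is normal in `G`. Moreover, if `H` is
normal then `H` equals its normal core, `H` is commutative with `h ^ q = 1` for all
`h ∈ H`, and every Sylow `p`-subgroup `P` of `G` satisfies `|P| = p`, `H ⊓ P = ⊥` and
`H * P = G`. -/
theorem stmt_11 {G : Type*} [Group G] [Finite G] (p q : ℕ)
    (hp : p.Prime) (hq : q.Prime) (hpq : p ≠ q) (hodd : Odd p)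
    (H N : Subgroup G) (hHp : H.index = p)
    (hNH : N ≤ H) (hNnorm : (N.subgroupOf H).Normal)
    (hNq : N.relIndex H = q) (hNcore : N.normalCore = ⊥)
    (hgen : Subgroup.closure {g : G | orderOf g = p} = ⊤) :
    (IsSolvable G ↔ H.Normal) ∧
    (H.Normal →
      H = H.normalCore ∧
      (∀ a b : G, a ∈ H → b ∈ H → a * b = b * a) ∧
      (∀ h : G, h ∈ H → h ^ q = 1) ∧
      ∀ P : Sylow p G, Nat.card P = p ∧ H ⊓ (P : Subgroup G) = ⊥ ∧
        ∀ g : G, ∃ h ∈ H, ∃ x ∈ (P : Subgroup G), g = h * x) := by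
  have key := aux_comm_pow q hq H N hNH hNnorm hNq hNcore
  constructor
  · constructor
    · intro hs
      exact aux_normal_of_solvable p hp H hHp hgen (hsolv := hs)
    · intro hH
      exact aux_solvable p hp H hHp hH (key hH).1
  · intro hH
    haveI := hH
    exact ⟨(H.normalCore_eq_self).symm, (key hH).1, (key hH).2,
      fun P => aux_sylow p q hp hq hpq H hHp (key hH).2 P⟩
end

section
/- Let G be a finite group, let p and q be distinct primes with p odd, let H be a subgroup of G of index p, and let N be a subgroup of G contained in H such that N is normal in H, N has index q in H, and the normal core of N in G is trivial. Assume moreover that G is generated by its elements of order p. Then N is the trivial subgroup if and only if the order of G equals p·q. Furthermore, if N is trivial, then p divides q − 1, H is a normal cyclic subgroup of G of order q, and G is nonabelian; that is, G is isomorphic to the nonabelian semidirect product ℤ/qℤ ⋊ ℤ/pℤ given by a faithful action of ℤ/pℤ on ℤ/qℤ. -/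
private lemma sub_eq_of_le_of_card_le {G : Type*} [Group G] [Finite G] {H K : Subgroup G}
    (h : H ≤ K) (hc : Nat.card K ≤ Nat.card H) : H = K := by
  apply SetLike.coe_injective
  apply Set.eq_of_subset_of_ncard_le h ?_ (Set.toFinite _)
  have h1 : Nat.card ((H : Set G) : Type _) = Nat.card H := rfl
  have h2 : Nat.card ((K : Set G) : Type _) = Nat.card K := rfl
  rw [← Nat.card_coe_set_eq, ← Nat.card_coe_set_eq, h1, h2]
  exact hc

private lemma aux_stmt12 {G : Type*} [Group G] [Finite G] (p q : ℕ)
    (hp : p.Prime) (hq : q.Prime) (hpq : p ≠ q)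
    (hgen : Subgroup.closure {g : G | orderOf g = p} = ⊤)
    (hcard : Nat.card G = p * q) (H : Subgroup G) (hHq : Nat.card H = q) :
    p ∣ q - 1 ∧ H.Normal ∧ IsCyclic H ∧
      ∃ φ : Multiplicative (ZMod p) →* MulAut (Multiplicative (ZMod q)),
        Function.Injective φ ∧
        Nonempty (G ≃* (Multiplicative (ZMod q)) ⋊[φ] (Multiplicative (ZMod p))) := by
  haveI := Fact.mk hp
  haveI := Fact.mk hq
  haveI : NeZero p := ⟨hp.ne_zero⟩
  haveI : NeZero q := ⟨hq.ne_zero⟩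
  have hq1 := hq.one_lt
  have hp1 := hp.one_lt
  -- Sylow subgroup cardinalities
  have hfacp : (Nat.card G).factorization p = 1 := by
    rw [hcard, Nat.factorization_mul hp.ne_zero hq.ne_zero]
    simp [hp.factorization, Nat.factorization_eq_zero_of_not_dvd
      (fun h => hpq ((Nat.prime_dvd_prime_iff_eq hp hq).mp h))]
  have hfacq : (Nat.card G).factorization q = 1 := by
    rw [hcard, Nat.factorization_mul hp.ne_zero hq.ne_zero]
    simp [hq.factorization, Nat.factorization_eq_zero_of_not_dvd
      (fun h => hpq ((Nat.prime_dvd_prime_iff_eq hq hp).mp h).symm)]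
  have hcardSylp : ∀ P : Sylow p G, Nat.card P = p := fun P => by
    rw [P.card_eq_multiplicity, hfacp, pow_one]
  have hcardSylq : ∀ Q : Sylow q G, Nat.card Q = q := fun Q => by
    rw [Q.card_eq_multiplicity, hfacq, pow_one]
  -- the Sylow p-subgroup is not unique
  have hnp : Nat.card (Sylow p G) ≠ 1 := by
    intro h1
    haveI : Subsingleton (Sylow p G) := (Nat.card_eq_one_iff_unique.mp h1).1
    obtain ⟨P⟩ := (inferInstance : Nonempty (Sylow p G))
    have hle : Subgroup.closure {g : G | orderOf g = p} ≤ (P : Subgroup G) := by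
      rw [Subgroup.closure_le]
      intro g hg
      have hzp : IsPGroup p (Subgroup.zpowers g) :=
        IsPGroup.of_card (by rw [Nat.card_zpowers, hg, pow_one])
      obtain ⟨Q, hQ⟩ := hzp.exists_le_sylow
      rw [Subsingleton.elim Q P] at hQ
      exact hQ (Subgroup.mem_zpowers g)
    rw [hgen, top_le_iff] at hle
    have hc := hcardSylp P
    rw [hle, Subgroup.card_top, hcard] at hc
    nlinarith
  -- the number of Sylow p-subgroups is q, hence p ∣ q - 1
  obtain ⟨P⟩ := (inferInstance : Nonempty (Sylow p G))
  have hPind : (P : Subgroup G).index = q := by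
    have h1 := Subgroup.card_mul_index (P : Subgroup G)
    rw [hcardSylp P, hcard] at h1
    exact Nat.eq_of_mul_eq_mul_left hp.pos h1
  have hnpq : Nat.card (Sylow p G) = q :=
    (hq.eq_one_or_self_of_dvd _ (hPind ▸ P.card_dvd_index)).resolve_left hnp
  have hmod := card_sylow_modEq_one p G
  rw [hnpq] at hmod
  have hdvd : p ∣ q - 1 := (Nat.modEq_iff_dvd' hq.one_le).mp hmod.symm
  have hpltq : p < q := lt_of_le_of_lt (Nat.le_of_dvd (by omega) hdvd) (by omega)
  -- the Sylow q-subgroup is unique and normal, and equals H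
  have hnq : Nat.card (Sylow q G) = 1 := by
    obtain ⟨Q⟩ := (inferInstance : Nonempty (Sylow q G))
    have hQind : (Q : Subgroup G).index = p := by
      have h1 := Subgroup.card_mul_index (Q : Subgroup G)
      rw [hcardSylq Q, hcard, mul_comm p q] at h1
      exact Nat.eq_of_mul_eq_mul_left hq.pos h1
    rcases hp.eq_one_or_self_of_dvd _ (hQind ▸ Q.card_dvd_index) with h | h
    · exact h
    · exfalso
      have hmodq := card_sylow_modEq_one q G
      rw [h] at hmodq
      have h2 : q ∣ p - 1 := (Nat.modEq_iff_dvd' hp.one_le).mp hmodq.symm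
      have := Nat.le_of_dvd (by omega) h2
      omega
  haveI hss : Subsingleton (Sylow q G) := (Nat.card_eq_one_iff_unique.mp hnq).1
  obtain ⟨Q⟩ := (inferInstance : Nonempty (Sylow q G))
  have hQnormal : (Q : Subgroup G).Normal := by
    rw [← Subgroup.normalizer_eq_top_iff, ← Subgroup.index_eq_one]
    exact Q.card_eq_index_normalizer.symm.trans hnq
  have hHQ : H = (Q : Subgroup G) := by
    have hHle : H ≤ (Q : Subgroup G) := by
      have hpg : IsPGroup q H := IsPGroup.of_card (by rw [hHq, pow_one])
      obtain ⟨Q', hQ'⟩ := hpg.exists_le_sylow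
      rwa [Subsingleton.elim Q' Q] at hQ'
    exact sub_eq_of_le_of_card_le hHle (by rw [hHq, hcardSylq Q])
  haveI hHnormal : H.Normal := hHQ ▸ hQnormal
  haveI hHcyc : IsCyclic H := isCyclic_of_prime_card hHq
  have hcardP : Nat.card (P : Subgroup G) = p := hcardSylp P
  -- complement
  have hcoprime : Nat.Coprime (Nat.card H) (Nat.card (P : Subgroup G)) := by
    rw [hHq, hcardP]
    exact (Nat.coprime_primes hq hp).mpr (fun h => hpq h.symm)
  have hcomp : Subgroup.IsComplement' H (P : Subgroup G) :=
    Subgroup.isComplement'_of_coprime (by rw [hHq, hcardP, hcard, mul_comm]) hcoprime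
  -- conjugation action of P on H
  set cP : ↥(P : Subgroup G) →* MulAut ↥H :=
    MulAut.conjNormal.comp (P : Subgroup G).subtype with hcP
  have hcPapply : ∀ (k : ↥(P : Subgroup G)) (h : ↥H), ((cP k h : ↥H) : G) = k * h * (k : G)⁻¹ := by
    intro k h
    simp [hcP, MulAut.conjNormal_apply]
  have hker : ∀ k : ↥(P : Subgroup G), cP k = 1 → k = 1 := by
    intro k hk
    by_contra hk1
    -- k centralizes H
    have hkcent : (k : G) ∈ Subgroup.centralizer (H : Set G) := by
      rw [Subgroup.mem_centralizer_iff]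
      intro h hh
      have h1 := congrArg (fun (α : MulAut ↥H) => ((α ⟨h, hh⟩ : ↥H) : G)) hk
      simp only [hcP, MonoidHom.comp_apply, Subgroup.coe_subtype,
        MulAut.conjNormal_apply, MulAut.one_apply] at h1
      calc h * (k : G) = ((k : G) * h * (k : G)⁻¹) * (k : G) := by rw [h1]
        _ = (k : G) * h := by group
    -- zpowers k = P
    have hordk : orderOf (k : G) = p := by
      have h1 : orderOf k ∣ p := by
        have := orderOf_dvd_natCard k; rwa [hcardP] at this
      have h2 : orderOf (k : G) = orderOf k := Subgroup.orderOf_coe k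
      rcases hp.eq_one_or_self_of_dvd _ h1 with h | h
      · exact absurd (orderOf_eq_one_iff.mp h) hk1
      · rw [h2, h]
    have hzP : Subgroup.zpowers (k : G) = (P : Subgroup G) := by
      apply sub_eq_of_le_of_card_le (Subgroup.zpowers_le.mpr k.2)
      rw [hcardP, Nat.card_zpowers, hordk]
    -- centralizer of H is everything
    have hCtop : Subgroup.centralizer (H : Set G) = ⊤ := by
      rw [← top_le_iff, ← hcomp.sup_eq_top, sup_le_iff]
      constructor
      · intro h hh
        rw [Subgroup.mem_centralizer_iff]
        intro h' hh'
        letI : CommGroup ↥H := IsCyclic.commGroup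
        have h2 := congrArg (H.subtype) (mul_comm (⟨h', hh'⟩ : ↥H) ⟨h, hh⟩)
        simpa using h2
      · rw [← hzP]
        exact Subgroup.zpowers_le.mpr hkcent
    -- H is central, so G is commutative
    have hHcenter : H ≤ Subgroup.center G := by
      intro h hh
      rw [Subgroup.mem_center_iff]
      intro g
      exact (Subgroup.mem_centralizer_iff.mp (hCtop ▸ Subgroup.mem_top g) h hh).symm
    have hHind : H.index = p := by
      have h1 := Subgroup.card_mul_index H
      rw [hHq, hcard, mul_comm p q] at h1
      exact Nat.eq_of_mul_eq_mul_left hq.pos h1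
    haveI : IsCyclic (G ⧸ H) :=
      isCyclic_of_prime_card (p := p) (by rw [← Subgroup.index_eq_card, hHind])
    have hcomm : ∀ a b : G, a * b = b * a :=
      commutative_of_cyclic_center_quotient (QuotientGroup.mk' H)
        (by rw [QuotientGroup.ker_mk']; exact hHcenter)
    -- torsion subgroup contradiction
    let T : Subgroup G :=
      { carrier := {g | g ^ p = 1}
        one_mem' := one_pow p
        mul_mem' := fun {a b} ha hb => by
          simp only [Set.mem_setOf_eq] at *
          rw [Commute.mul_pow (hcomm a b), ha, hb, one_mul]
        inv_mem' := fun {a} ha => by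
          simp only [Set.mem_setOf_eq] at *
          rw [inv_pow, ha, inv_one] }
    have hTtop : (⊤ : Subgroup G) ≤ T := by
      rw [← hgen]
      refine (Subgroup.closure_le _).mpr ?_
      intro g hg
      show g ^ p = 1
      rw [← hg]
      exact pow_orderOf_eq_one g
    haveI : Nontrivial ↥H := by
      rw [← Finite.one_lt_card_iff_nontrivial, hHq]; exact hq.one_lt
    obtain ⟨h0, hh0⟩ := exists_ne (1 : ↥H)
    have hordh0 : orderOf (h0 : G) = q := by
      have h1 : orderOf h0 ∣ q := hHq ▸ orderOf_dvd_natCard h0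
      rw [Subgroup.orderOf_coe h0]
      rcases hq.eq_one_or_self_of_dvd _ h1 with h | h
      · exact absurd (orderOf_eq_one_iff.mp h) hh0
      · exact h
    have hpow : (h0 : G) ^ p = 1 := hTtop (Subgroup.mem_top _)
    have : q ∣ p := hordh0 ▸ orderOf_dvd_of_pow_eq_one hpow
    exact absurd ((Nat.prime_dvd_prime_iff_eq hq hp).mp this).symm hpq
  have hkerinj : Function.Injective cP := (injective_iff_map_eq_one cP).mpr hker
  -- build the semidirect product isomorphism
  have hcardMq : Nat.card (Multiplicative (ZMod q)) = q := by
    rw [Nat.card_congr Multiplicative.toAdd, Nat.card_zmod]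
  have hcardMp : Nat.card (Multiplicative (ZMod p)) = p := by
    rw [Nat.card_congr Multiplicative.toAdd, Nat.card_zmod]
  let eH : ↥H ≃* Multiplicative (ZMod q) := mulEquivOfPrimeCardEq (p := q) hHq hcardMq
  let eP : Multiplicative (ZMod p) ≃* ↥(P : Subgroup G) :=
    mulEquivOfPrimeCardEq (p := p) hcardMp hcardP
  refine ⟨hdvd, hHnormal, hHcyc,
    (MulAut.congr eH).toMonoidHom.comp (cP.comp eP.toMonoidHom), ?_, ?_⟩
  · exact (MulAut.congr eH).injective.comp (hkerinj.comp eP.injective)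
  · set φ := (MulAut.congr eH).toMonoidHom.comp (cP.comp eP.toMonoidHom) with hφ
    let f₁ : Multiplicative (ZMod q) →* G := H.subtype.comp eH.symm.toMonoidHom
    let f₂ : Multiplicative (ZMod p) →* G := (P : Subgroup G).subtype.comp eP.toMonoidHom
    have hcompat : ∀ g', f₁.comp (φ g').toMonoidHom
        = (MulAut.conj (f₂ g')).toMonoidHom.comp f₁ := by
      intro g'
      refine MonoidHom.ext fun n => ?_
      simp only [f₁, f₂, hφ, MonoidHom.comp_apply, MulEquiv.coe_toMonoidHom,
        MulAut.congr_apply, MulEquiv.trans_apply, MulEquiv.symm_apply_apply,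
        Subgroup.coe_subtype, MulAut.conj_apply]
      rw [hcPapply]
    let ψ := SemidirectProduct.lift f₁ f₂ hcompat
    have hψ : ∀ x : Multiplicative (ZMod q) ⋊[φ] Multiplicative (ZMod p),
        ψ x = ((eH.symm x.left : ↥H) : G) * ((eP x.right : ↥(P : Subgroup G)) : G) := by
      rintro ⟨n, g⟩
      rfl
    have hψinj : Function.Injective ψ := by
      rw [injective_iff_map_eq_one]
      rintro ⟨n, g⟩ h1
      rw [hψ] at h1
      have hmem : ((eH.symm n : ↥H) : G) ∈ H ⊓ (P : Subgroup G) := by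
        refine ⟨SetLike.coe_mem _, ?_⟩
        have h2 : ((eH.symm n : ↥H) : G) = (((eP g : ↥(P : Subgroup G)) : G))⁻¹ :=
          eq_inv_of_mul_eq_one_left h1
        rw [h2]
        exact (P : Subgroup G).inv_mem (SetLike.coe_mem _)
      rw [Subgroup.inf_eq_bot_of_coprime hcoprime, Subgroup.mem_bot] at hmem
      have hn : n = 1 := by
        have : eH.symm n = 1 := Subtype.ext hmem
        have h3 := congrArg eH this
        rwa [MulEquiv.apply_symm_apply, map_one] at h3
      have hg : g = 1 := by
        rw [hmem, one_mul] at h1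
        have : eP g = 1 := Subtype.ext h1
        have h3 := congrArg eP.symm this
        rwa [MulEquiv.symm_apply_apply, map_one] at h3
      ext <;> simp [hn, hg]
    let e : (Multiplicative (ZMod q) ⋊[φ] Multiplicative (ZMod p)) ≃ (ZMod q × ZMod p) :=
      ⟨fun x => (x.left, x.right), fun x => ⟨x.1, x.2⟩, fun _ => rfl, fun _ => rfl⟩
    haveI : Finite (Multiplicative (ZMod q) ⋊[φ] Multiplicative (ZMod p)) :=
      Finite.of_equiv _ e.symm
    have hbij : Function.Bijective ψ := by
      rw [Nat.bijective_iff_injective_and_card]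
      refine ⟨hψinj, ?_⟩
      rw [Nat.card_congr e, Nat.card_prod, Nat.card_zmod, Nat.card_zmod, hcard, mul_comm]
    exact ⟨(MulEquiv.ofBijective ψ hbij).symm⟩

/-- With the standing hypotheses on `G`, `H`, `N`, with `p` odd, and `G` generated by
its elements of order `p`: `N` is trivial iff `|G| = p * q`. Furthermore, if `N` is
trivial then `p ∣ q - 1`, `H` is a normal cyclic subgroup of `G` of order `q`, and
`G` is isomorphic to the nonabelian semidirect product `ℤ/qℤ ⋊ ℤ/pℤ` given by a
faithful action of `ℤ/pℤ` on `ℤ/qℤ`. -/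
theorem stmt_12 {G : Type*} [Group G] [Finite G] (p q : ℕ)
    (hp : p.Prime) (hq : q.Prime) (hpq : p ≠ q) (hodd : Odd p)
    (H N : Subgroup G) (hHp : H.index = p)
    (hNH : N ≤ H) (hNnorm : (N.subgroupOf H).Normal)
    (hNq : N.relIndex H = q) (hNcore : N.normalCore = ⊥)
    (hgen : Subgroup.closure {g : G | orderOf g = p} = ⊤) :
    (N = ⊥ ↔ Nat.card G = p * q) ∧
    (N = ⊥ →
      p ∣ q - 1 ∧ H.Normal ∧ IsCyclic H ∧ Nat.card H = q ∧
      ∃ φ : Multiplicative (ZMod p) →* MulAut (Multiplicative (ZMod q)),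
        Function.Injective φ ∧
        Nonempty (G ≃* (Multiplicative (ZMod q)) ⋊[φ] (Multiplicative (ZMod p)))) := by
  have hNind : N.index = p * q := by
    rw [← Subgroup.relIndex_mul_index hNH, hNq, hHp, mul_comm]
  have hiff : N = ⊥ ↔ Nat.card G = p * q := by
    constructor
    · intro h
      rw [h, Subgroup.index_bot] at hNind
      exact hNind
    · intro h
      rw [← Subgroup.card_eq_one]
      have h2 := Subgroup.card_mul_index N
      rw [hNind, h] at h2
      have hpos : 0 < p * q := Nat.mul_pos hp.pos hq.pos
      nth_rewrite 2 [← one_mul (p * q)] at h2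
      exact Nat.eq_of_mul_eq_mul_right hpos h2
  refine ⟨hiff, fun hbot => ?_⟩
  have hcard : Nat.card G = p * q := hiff.mp hbot
  have hHq : Nat.card H = q := by
    have h1 := Subgroup.card_mul_index H
    rw [hHp, hcard, mul_comm p q] at h1
    exact Nat.eq_of_mul_eq_mul_right hp.pos h1
  obtain ⟨h1, h2, h3, h4⟩ := aux_stmt12 p q hp hq hpq hgen hcard H hHq
  exact ⟨h1, h2, h3, hHq, h4⟩
end

section
/- Let p ≥ 7 be a prime and let H be a subgroup of index p in the alternating group A_p on p letters. Then H has no normal subgroup of prime index; that is, there is no subgroup N of H that is normal in H and whose index in H is a prime number. -/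
open Equiv Equiv.Perm commutatorElement

private lemma tau_spec {α : Type*} [Fintype α] [DecidableEq α] {a₃ a₄ a₅ : α}
    (h34 : a₃ ≠ a₄) (h35 : a₃ ≠ a₅) (h45 : a₄ ≠ a₅) :
    IsThreeCycle (swap a₄ a₃ * swap a₄ a₅) ∧
    (swap a₄ a₃ * swap a₄ a₅) a₃ = a₄ ∧
    (swap a₄ a₃ * swap a₄ a₅) a₅ = a₃ ∧
    (∀ x, x ≠ a₃ → x ≠ a₄ → x ≠ a₅ → (swap a₄ a₃ * swap a₄ a₅) x = x) ∧
    (swap a₄ a₃ * swap a₄ a₅)⁻¹ a₃ = a₅ ∧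
    (∀ x, x ≠ a₃ → x ≠ a₄ → x ≠ a₅ → (swap a₄ a₃ * swap a₄ a₅)⁻¹ x = x) := by
  have hs : ∀ x, x ≠ a₃ → x ≠ a₄ → x ≠ a₅ → (swap a₄ a₃ * swap a₄ a₅) x = x := by
    intro x hx3 hx4 hx5
    simp [mul_apply, swap_apply_of_ne_of_ne, hx3, hx4, hx5]
  refine ⟨isThreeCycle_swap_mul_swap_same (Ne.symm h34) h45 h35, ?_, ?_, hs, ?_, ?_⟩
  · simp [mul_apply, swap_apply_of_ne_of_ne, swap_apply_left, swap_apply_right,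
      h34, h35, h45, h34.symm, h35.symm, h45.symm]
  · simp [mul_apply, swap_apply_of_ne_of_ne, swap_apply_left, swap_apply_right,
      h34, h35, h45, h34.symm, h35.symm, h45.symm]
  · rw [inv_eq_iff_eq]
    simp [mul_apply, swap_apply_of_ne_of_ne, swap_apply_left, swap_apply_right,
      h34, h35, h45, h34.symm, h35.symm, h45.symm]
  · intro x hx3 hx4 hx5
    rw [inv_eq_iff_eq]
    exact (hs x hx3 hx4 hx5).symm

private lemma exists_threeCycle_mem {α : Type*} [Fintype α] [DecidableEq α]
    (h5 : 5 ≤ Fintype.card α) {N : Subgroup (alternatingGroup α)} (hN : N.Normal)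
    (hbot : N ≠ ⊥) : ∃ g ∈ N, IsThreeCycle ((g : alternatingGroup α) : Perm α) := by
  classical
  obtain ⟨g₀, hg₀N, hg₀⟩ := N.bot_or_exists_ne_one.resolve_left hbot
  have hex : ∃ n : ℕ, ∃ g : alternatingGroup α, g ∈ N ∧ g ≠ 1 ∧
      ((g : Perm α)).support.card = n := ⟨_, g₀, hg₀N, hg₀, rfl⟩
  obtain ⟨σA, hσN, hσ1, hσcard⟩ := Nat.find_spec hex
  set σ : Perm α := (σA : Perm α) with hσdef
  by_cases h3 : σ.support.card = 3
  · exact ⟨σA, hσN, card_support_eq_three_iff.mp h3⟩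
  exfalso
  have hσp1 : σ ≠ 1 := fun h => hσ1 (Subtype.ext h)
  have hsign : Perm.sign σ = 1 := mem_alternatingGroup.mp σA.2
  have h4 : 4 ≤ σ.support.card := by
    have h1 : σ.support.card ≠ 2 := by
      intro hc
      obtain ⟨x, y, hxy, hxyeq⟩ := card_support_eq_two.mp hc
      rw [hxyeq, sign_swap hxy] at hsign
      exact absurd hsign (by decide)
    have h2 : ¬ σ.support.card ≤ 1 := fun hc => hσp1 (card_support_le_one.mp hc)
    omega
  -- minimality helper
  have hmin : ∀ τ : Perm α, IsThreeCycle τ → τ * σ * τ⁻¹ * σ⁻¹ ≠ 1 →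
      (τ * σ * τ⁻¹ * σ⁻¹).support.card < σ.support.card → False := by
    intro τ hτ hne hlt
    have hτA : τ ∈ alternatingGroup α := hτ.mem_alternatingGroup
    have hmem : (⟨τ, hτA⟩ * σA * ⟨τ, hτA⟩⁻¹ * σA⁻¹ : alternatingGroup α) ∈ N :=
      mul_mem (hN.conj_mem σA hσN ⟨τ, hτA⟩) (inv_mem hσN)
    have hco : ((⟨τ, hτA⟩ * σA * ⟨τ, hτA⟩⁻¹ * σA⁻¹ : alternatingGroup α) : Perm α)
        = τ * σ * τ⁻¹ * σ⁻¹ := rfl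
    have hne2 : (⟨τ, hτA⟩ * σA * ⟨τ, hτA⟩⁻¹ * σA⁻¹ : alternatingGroup α) ≠ 1 := by
      intro h
      exact hne (by rw [← hco, h]; rfl)
    rw [hσcard] at hlt
    exact Nat.find_min hex hlt ⟨_, hmem, hne2, by rw [hco]⟩
  by_cases hsq : σ * σ = 1
  · -- involution case
    have hinv : ∀ x, σ (σ x) = x := by
      intro x
      have := Equiv.ext_iff.mp hsq x
      simpa [mul_apply] using this
    obtain ⟨a₁, ha₁⟩ := Finset.card_pos.mp (by omega : 0 < σ.support.card)
    have ha₁s : σ a₁ ≠ a₁ := mem_support.mp ha₁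
    have h21 : σ a₁ ≠ a₁ := ha₁s
    set a₂ := σ a₁ with ha₂def
    have hσa₂ : σ a₂ = a₁ := hinv a₁
    have ha₂s : a₂ ∈ σ.support := mem_support.mpr (by rw [hσa₂]; exact fun h => h21 h.symm)
    have hcard' : 0 < (σ.support \ {a₁, a₂}).card := by
      have hle : (({a₁, a₂} : Finset α)).card ≤ 2 :=
        (Finset.card_insert_le _ _).trans (by simp)
      have := Finset.le_card_sdiff ({a₁, a₂} : Finset α) σ.support
      omega
    obtain ⟨a₃, ha₃'⟩ := Finset.card_pos.mp hcard'
    rw [Finset.mem_sdiff] at ha₃'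
    obtain ⟨ha₃s, ha₃n⟩ := ha₃'
    simp only [Finset.mem_insert, Finset.mem_singleton, not_or] at ha₃n
    obtain ⟨h31, h32⟩ := ha₃n
    set a₄ := σ a₃ with ha₄def
    have h43 : a₄ ≠ a₃ := mem_support.mp ha₃s
    have hσa₄ : σ a₄ = a₃ := hinv a₃
    have ha₄s : a₄ ∈ σ.support := mem_support.mpr (by rw [hσa₄]; exact h43.symm)
    have h41 : a₄ ≠ a₁ := by
      intro h
      apply h32
      rw [← hσa₄, h]
    have h42 : a₄ ≠ a₂ := by
      intro h
      apply h31
      rw [← hσa₄, h]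
      exact hσa₂
    obtain ⟨a₅, ha₅⟩ : ∃ x : α, x ∉ ({a₁, a₂, a₃, a₄} : Finset α) := by
      by_contra hcon
      push_neg at hcon
      have hsub : Finset.univ ⊆ ({a₁, a₂, a₃, a₄} : Finset α) := fun x _ => hcon x
      have hcard := Finset.card_le_card hsub
      rw [Finset.card_univ] at hcard
      have c1 := Finset.card_insert_le a₁ ({a₂, a₃, a₄} : Finset α)
      have c2 := Finset.card_insert_le a₂ ({a₃, a₄} : Finset α)
      have c3 := Finset.card_insert_le a₃ ({a₄} : Finset α)
      have c4 : ({a₄} : Finset α).card = 1 := Finset.card_singleton a₄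
      omega
    simp only [Finset.mem_insert, Finset.mem_singleton, not_or] at ha₅
    obtain ⟨h51, h52, h53, h54⟩ := ha₅
    obtain ⟨hτ3, hτa₃, hτa₅, hτfix, hτia₃, hτifix⟩ :=
      tau_spec h43.symm (fun h => h53 h.symm) (fun h => h54 h.symm)
    set τ := swap a₄ a₃ * swap a₄ a₅ with hτdef
    have hτ1 : τ a₁ = a₁ := hτfix a₁ (Ne.symm h31) (Ne.symm h41) (Ne.symm h51)
    have hτ2 : τ a₂ = a₂ := hτfix a₂ (Ne.symm h32) (Ne.symm h42) (Ne.symm h52)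
    have hτi1 : τ⁻¹ a₁ = a₁ := hτifix a₁ (Ne.symm h31) (Ne.symm h41) (Ne.symm h51)
    have hτi2 : τ⁻¹ a₂ = a₂ := hτifix a₂ (Ne.symm h32) (Ne.symm h42) (Ne.symm h52)
    have hσa₃' : σ a₃ = a₄ := ha₄def.symm
    -- σ₂ ≠ 1
    have hneq : τ * σ * τ⁻¹ * σ⁻¹ ≠ 1 := by
      intro h
      have hconj : τ * σ * τ⁻¹ = σ := mul_inv_eq_one.mp h
      have := Equiv.ext_iff.mp hconj a₃
      rw [mul_apply, mul_apply, hτia₃, hσa₃'] at this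
      by_cases hc : σ a₅ = a₅
      · rw [hc, hτa₅] at this
        exact h43 this.symm
      · have h65 : σ a₅ ≠ a₅ := hc
        have h63 : σ a₅ ≠ a₃ := by
          intro h'
          apply h54
          rw [← hinv a₅, h']
        have h64 : σ a₅ ≠ a₄ := by
          intro h'
          apply h53
          rw [← hinv a₅, h', hσa₄]
        rw [hτfix (σ a₅) h63 h64 h65] at this
        exact h64 this
    -- fixed points
    have hσi1 : σ⁻¹ a₁ = a₂ := by rw [inv_eq_iff_eq, hσa₂]
    have hσi2 : σ⁻¹ a₂ = a₁ := by rw [inv_eq_iff_eq]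
    have hfix1 : (τ * σ * τ⁻¹ * σ⁻¹) a₁ = a₁ := by
      simp only [mul_apply]
      rw [hσi1, hτi2, hσa₂, hτ1]
    have hfix2 : (τ * σ * τ⁻¹ * σ⁻¹) a₂ = a₂ := by
      simp only [mul_apply]
      rw [hσi2, hτi1, ← ha₂def, hτ2]
    -- support bound
    have hsub : (τ * σ * τ⁻¹ * σ⁻¹).support ⊆ ((insert a₅ σ.support).erase a₁).erase a₂ := by
      intro x hx
      have hx' := mem_support.mp hx
      rw [Finset.mem_erase, Finset.mem_erase, Finset.mem_insert]
      refine ⟨fun h => hx' (by rw [h]; exact hfix2), fun h => hx' (by rw [h]; exact hfix1), ?_⟩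
      by_contra hcon
      push_neg at hcon
      obtain ⟨hx5, hxs⟩ := hcon
      have hσx : σ x = x := notMem_support.mp hxs
      have hσix : σ⁻¹ x = x := by rw [inv_eq_iff_eq, hσx]
      have hx3 : x ≠ a₃ := fun h => hxs (h ▸ ha₃s)
      have hx4 : x ≠ a₄ := fun h => hxs (h ▸ ha₄s)
      apply hx'
      simp only [mul_apply]
      rw [hσix, hτifix x hx3 hx4 hx5, hσx, hτfix x hx3 hx4 hx5]
    have hlt : (τ * σ * τ⁻¹ * σ⁻¹).support.card < σ.support.card := by
      have h1 := Finset.card_le_card hsub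
      have e1 : a₁ ∈ insert a₅ σ.support := Finset.mem_insert_of_mem ha₁
      have e2 : a₂ ∈ (insert a₅ σ.support).erase a₁ :=
        Finset.mem_erase.mpr ⟨fun h => h21 h, Finset.mem_insert_of_mem ha₂s⟩
      rw [Finset.card_erase_of_mem e2, Finset.card_erase_of_mem e1] at h1
      have h2 := Finset.card_insert_le a₅ σ.support
      have h3 := Finset.card_le_card (Finset.subset_insert a₅ σ.support)
      omega
    exact hmin τ hτ3 hneq hlt
  · -- non-involution case
    have hn4 : σ.support.card ≠ 4 := by
      intro h4eq
      apply hsq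
      have hsum : σ.cycleType.sum = 4 := by rw [sum_cycleType]; exact h4eq
      have hsign' := sign_of_cycleType σ
      rw [hsign, hsum] at hsign'
      have heven : Even (Multiset.card σ.cycleType) := by
        rw [pow_add, (by decide : ((-1 : ℤˣ)) ^ 4 = 1), one_mul] at hsign'
        exact (neg_one_pow_eq_one_iff_even (by decide : (-1 : ℤˣ) ≠ 1)).mp hsign'.symm
      have hle : ∀ x ∈ σ.cycleType, 2 ≤ x := fun x hx => two_le_of_mem_cycleType hx
      have h2c := Multiset.card_nsmul_le_sum hle
      rw [hsum, smul_eq_mul] at h2c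
      have hne0 : σ.cycleType ≠ 0 := fun h => hσp1 (cycleType_eq_zero.mp h)
      have hpos : 0 < Multiset.card σ.cycleType := Multiset.card_pos.mpr hne0
      have hcard2 : Multiset.card σ.cycleType = 2 := by
        obtain ⟨k, hk⟩ := heven
        omega
      obtain ⟨a, b, hab⟩ := Multiset.card_eq_two.mp hcard2
      have haT : a ∈ σ.cycleType := by rw [hab]; simp
      have hbT : b ∈ σ.cycleType := by rw [hab]; simp
      have ha2 := two_le_of_mem_cycleType haT
      have hb2 := two_le_of_mem_cycleType hbT
      have hab4 : a + b = 4 := by rw [hab] at hsum; simpa using hsum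
      have haa : a = 2 := by omega
      have hbb : b = 2 := by omega
      have horder : orderOf σ ∣ 2 := by
        rw [← lcm_cycleType, hab, haa, hbb]
        simp
      rw [← pow_two]
      exact orderOf_dvd_iff_pow_eq_one.mp horder
    have h5c : 5 ≤ σ.support.card := by omega
    obtain ⟨a₁, ha₁⟩ : ∃ x, σ (σ x) ≠ x := by
      by_contra hcon
      push_neg at hcon
      exact hsq (Equiv.ext fun x => by simpa [mul_apply] using hcon x)
    set a₂ := σ a₁ with ha₂def
    set a₃ := σ a₂ with ha₃def
    have h12 : a₁ ≠ a₂ := by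
      intro h
      apply ha₁
      rw [ha₃def, ← h, ← ha₂def, ← h]
    have hσa₁ : σ a₁ = a₂ := ha₂def.symm
    have hσa₂' : σ a₂ = a₃ := ha₃def.symm
    have h23 : a₂ ≠ a₃ := by
      intro h
      have h1 : σ a₂ = a₂ := by rw [hσa₂', ← h]
      have h2 : σ (σ a₁) = σ a₁ := by rw [← ha₂def]; exact h1
      have h3 := σ.injective h2
      exact h12 (by rw [ha₂def, h3])
    have h13 : a₁ ≠ a₃ := ha₁.symm
    have ha₁s : a₁ ∈ σ.support := mem_support.mpr (by rw [hσa₁]; exact fun h => h12 h.symm)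
    have ha₂s : a₂ ∈ σ.support := mem_support.mpr (by rw [hσa₂']; exact fun h => h23 h.symm)
    have ha₃s : a₃ ∈ σ.support := by
      rw [← support_inv]
      apply mem_support.mpr
      have hi : σ⁻¹ a₃ = a₂ := by rw [inv_eq_iff_eq]
      rw [hi]; exact h23
    have hsd : 1 < (σ.support \ {a₁, a₂, a₃}).card := by
      have c1 := Finset.card_insert_le a₁ ({a₂, a₃} : Finset α)
      have c2 := Finset.card_insert_le a₂ ({a₃} : Finset α)
      have c3 : ({a₃} : Finset α).card = 1 := Finset.card_singleton a₃
      have := Finset.le_card_sdiff ({a₁, a₂, a₃} : Finset α) σ.support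
      omega
    obtain ⟨a₄, ha₄m, a₅, ha₅m, h45⟩ := Finset.one_lt_card.mp hsd
    rw [Finset.mem_sdiff] at ha₄m ha₅m
    obtain ⟨ha₄s, ha₄n⟩ := ha₄m
    obtain ⟨ha₅s, ha₅n⟩ := ha₅m
    simp only [Finset.mem_insert, Finset.mem_singleton, not_or] at ha₄n ha₅n
    obtain ⟨h41, h42, h43⟩ := ha₄n
    obtain ⟨h51, h52, h53⟩ := ha₅n
    obtain ⟨hτ3, hτa₃, hτa₅, hτfix, hτia₃, hτifix⟩ :=
      tau_spec (fun h => h43 h.symm) (fun h => h53 h.symm) h45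
    set τ := swap a₄ a₃ * swap a₄ a₅ with hτdef
    have hτ1 : τ a₁ = a₁ := hτfix a₁ h13 (Ne.symm h41) (Ne.symm h51)
    have hτ2 : τ a₂ = a₂ := hτfix a₂ h23 (Ne.symm h42) (Ne.symm h52)
    have hτi1 : τ⁻¹ a₁ = a₁ := hτifix a₁ h13 (Ne.symm h41) (Ne.symm h51)
    have hτi2 : τ⁻¹ a₂ = a₂ := hτifix a₂ h23 (Ne.symm h42) (Ne.symm h52)
    have hneq : τ * σ * τ⁻¹ * σ⁻¹ ≠ 1 := by
      intro h
      have hconj := mul_inv_eq_one.mp h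
      have hc := Equiv.ext_iff.mp hconj a₂
      rw [mul_apply, mul_apply, hτi2, hσa₂', hτa₃] at hc
      exact h43 hc
    have hσi2 : σ⁻¹ a₂ = a₁ := by rw [inv_eq_iff_eq]
    have hfix2 : (τ * σ * τ⁻¹ * σ⁻¹) a₂ = a₂ := by
      simp only [mul_apply]
      rw [hσi2, hτi1, ← ha₂def, hτ2]
    have hsub : (τ * σ * τ⁻¹ * σ⁻¹).support ⊆ σ.support.erase a₂ := by
      intro x hx
      have hx' := mem_support.mp hx
      rw [Finset.mem_erase]
      refine ⟨fun h => hx' (by rw [h]; exact hfix2), ?_⟩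
      by_contra hxs
      have hσx : σ x = x := notMem_support.mp hxs
      have hσix : σ⁻¹ x = x := by rw [inv_eq_iff_eq, hσx]
      have hx3 : x ≠ a₃ := fun h => hxs (h ▸ ha₃s)
      have hx4 : x ≠ a₄ := fun h => hxs (h ▸ ha₄s)
      have hx5 : x ≠ a₅ := fun h => hxs (h ▸ ha₅s)
      apply hx'
      simp only [mul_apply]
      rw [hσix, hτifix x hx3 hx4 hx5, hσx, hτfix x hx3 hx4 hx5]
    have hlt : (τ * σ * τ⁻¹ * σ⁻¹).support.card < σ.support.card := by
      have h1 := Finset.card_le_card hsub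
      rw [Finset.card_erase_of_mem ha₂s] at h1
      omega
    exact hmin τ hτ3 hneq hlt

private lemma altSimple {α : Type*} [Fintype α] [DecidableEq α] (h5 : 5 ≤ Fintype.card α) :
    IsSimpleGroup (alternatingGroup α) := by
  haveI : Nontrivial (alternatingGroup α) :=
    alternatingGroup.nontrivial_of_three_le_card (by rw [Nat.card_eq_fintype_card]; omega)
  constructor
  intro N hN
  rcases eq_or_ne N ⊥ with h | h
  · exact Or.inl h
  · right
    haveI := hN
    obtain ⟨g, hgN, hg3⟩ := exists_threeCycle_mem h5 hN h
    have hcl := hg3.alternating_normalClosure (by rw [Nat.card_eq_fintype_card]; exact h5)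
    rw [eq_top_iff, ← hcl]
    apply Subgroup.normalClosure_le_normal
    rw [Set.singleton_subset_iff, SetLike.mem_coe]
    have : (⟨(g : Perm α), hg3.mem_alternatingGroup⟩ : alternatingGroup α) = g :=
      Subtype.ext rfl
    rwa [this]

private lemma altPerfect {α : Type*} [Fintype α] [DecidableEq α] (h5 : 5 ≤ Fintype.card α) :
    commutator (alternatingGroup α) = ⊤ := by
  haveI := altSimple (α := α) h5
  rcases (Subgroup.commutator_normal (⊤ : Subgroup (alternatingGroup α)) ⊤).eq_bot_or_eq_top
    with h | h
  · exfalso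
    have hcomm : ∀ a b : alternatingGroup α, a * b = b * a := by
      intro a b
      have hm : ⁅a, b⁆ ∈ commutator (alternatingGroup α) :=
        Subgroup.commutator_mem_commutator (Subgroup.mem_top a) (Subgroup.mem_top b)
      rw [commutator_def, h, Subgroup.mem_bot] at hm
      exact commutatorElement_eq_one_iff_mul_comm.mp hm
    haveI : Group.IsSolvable (alternatingGroup α) := isSolvable_of_comm hcomm
    haveI : Group.IsSolvable (Equiv.Perm α) := by
      apply solvable_of_ker_le_range (alternatingGroup α).subtype (Equiv.Perm.sign (α := α))
      rw [Subgroup.range_subtype, ← alternatingGroup_eq_sign_ker]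
    exact Equiv.Perm.not_solvable α
      (by rw [Cardinal.mk_fintype]; exact_mod_cast Nat.cast_le.mpr h5) this
  · rw [commutator_def]
    exact h

/-- Let `p ≥ 7` be a prime and `H` a subgroup of index `p` in the alternating group
`A_p`. Then `H` has no normal subgroup of prime index. -/
theorem stmt_15 (p : ℕ) (hp : p.Prime) (hp7 : 7 ≤ p)
    (H : Subgroup (alternatingGroup (Fin p))) (hH : H.index = p) :
    ¬ ∃ N : Subgroup H, N.Normal ∧ N.index.Prime := by
  rintro ⟨N, hNnormal, hNprime⟩
  classical
  have hcardFin : Fintype.card (Fin p) = p := Fintype.card_fin p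
  have h5p : 5 ≤ Fintype.card (Fin p) := by omega
  haveI : Nontrivial (Fin p) := by
    rw [← Fintype.one_lt_card_iff_nontrivial]; omega
  haveI hsimple : IsSimpleGroup (alternatingGroup (Fin p)) := altSimple h5p
  have hperfG : commutator (alternatingGroup (Fin p)) = ⊤ := altPerfect h5p
  have hHne : H ≠ ⊤ := by
    intro h
    rw [h, Subgroup.index_top] at hH
    omega
  set φ := MulAction.toPermHom (alternatingGroup (Fin p)) (alternatingGroup (Fin p) ⧸ H) with hφdef
  have hker : φ.ker = ⊥ := by
    have h1 : φ.ker = H.normalCore := (Subgroup.normalCore_eq_ker H).symm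
    rcases (H.normalCore_normal).eq_bot_or_eq_top with h | h
    · rw [h1, h]
    · exact absurd (top_le_iff.mp (h ▸ H.normalCore_le)) hHne
  have hinj : Function.Injective φ := by
    rwa [MonoidHom.ker_eq_bot_iff] at hker
  haveI : Fintype (alternatingGroup (Fin p) ⧸ H) := Fintype.ofFinite _
  haveI : DecidableEq (alternatingGroup (Fin p) ⧸ H) := Classical.decEq _
  have hQcard : Fintype.card (alternatingGroup (Fin p) ⧸ H) = p := by
    rw [← Nat.card_eq_fintype_card]
    exact hH
  haveI : Nontrivial (alternatingGroup (Fin p) ⧸ H) := by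
    rw [← Fintype.one_lt_card_iff_nontrivial]; omega
  have hGcard2 : 2 * Fintype.card (alternatingGroup (Fin p)) = Nat.factorial p := by
    rw [two_mul_card_alternatingGroup, Fintype.card_perm, hcardFin]
  -- range of φ lands in the alternating group
  have hrange_le : φ.range ≤ alternatingGroup (alternatingGroup (Fin p) ⧸ H) := by
    rintro x ⟨g, rfl⟩
    rw [Equiv.Perm.mem_alternatingGroup]
    have hker2 : g ∈ (Equiv.Perm.sign.comp φ).ker := by
      have : commutator (alternatingGroup (Fin p)) ≤ (Equiv.Perm.sign.comp φ).ker :=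
        Abelianization.commutator_subset_ker _
      exact this (hperfG ▸ Subgroup.mem_top g)
    simpa using hker2
  -- range = alternating group, by cardinality
  have hrange_eq : φ.range = alternatingGroup (alternatingGroup (Fin p) ⧸ H) := by
    have hcard_range : Nat.card φ.range = Nat.card (alternatingGroup (Fin p)) :=
      (Nat.card_congr (MonoidHom.ofInjective hinj).toEquiv).symm
    have hAcard : 2 * Fintype.card (alternatingGroup (alternatingGroup (Fin p) ⧸ H)) = Nat.factorial p := by
      rw [two_mul_card_alternatingGroup, Fintype.card_perm, hQcard]
    have hcards : Nat.card (alternatingGroup (alternatingGroup (Fin p) ⧸ H)) ≤ Nat.card φ.range := by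
      rw [hcard_range, Nat.card_eq_fintype_card, Nat.card_eq_fintype_card]
      omega
    apply SetLike.coe_injective
    apply Set.eq_of_subset_of_ncard_le hrange_le _ (Set.toFinite _)
    rw [← Nat.card_coe_set_eq, ← Nat.card_coe_set_eq]
    exact hcards
  -- the base point and membership criterion
  set x₀ : alternatingGroup (Fin p) ⧸ H := ((1 : alternatingGroup (Fin p)) : alternatingGroup (Fin p) ⧸ H) with hx₀def
  have hφapp : ∀ g : alternatingGroup (Fin p), φ g x₀ = ((g : alternatingGroup (Fin p)) : alternatingGroup (Fin p) ⧸ H) := by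
    intro g
    show g • x₀ = _
    rw [hx₀def]
    rw [MulAction.Quotient.smul_mk H g 1, smul_eq_mul, mul_one]
  have hmemH : ∀ g : alternatingGroup (Fin p), φ g x₀ = x₀ ↔ g ∈ H := by
    intro g
    rw [hφapp, hx₀def]
    constructor
    · intro h
      have := QuotientGroup.eq.mp h
      simpa using this
    · intro h
      apply QuotientGroup.eq.mpr
      simpa using h
  -- restriction to the complement of the base point
  have hfix : ∀ h : H, ∀ y : alternatingGroup (Fin p) ⧸ H, y ≠ x₀ ↔ φ (h : alternatingGroup (Fin p)) y ≠ x₀ := by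
    intro h y
    have h1 : φ (h : alternatingGroup (Fin p)) x₀ = x₀ := (hmemH _).mpr h.2
    constructor
    · intro hy hc
      exact hy ((φ (h : alternatingGroup (Fin p))).injective (hc.trans h1.symm))
    · intro hy hc
      exact hy (by rw [hc]; exact h1)
  set θfun : H → Equiv.Perm {y : alternatingGroup (Fin p) ⧸ H // y ≠ x₀} :=
    fun h => (φ (h : alternatingGroup (Fin p))).subtypePerm (fun y => (hfix h y).symm) with hθfun
  have θmul : ∀ a b : H, θfun (a * b) = θfun a * θfun b := by
    intro a b
    ext y
    simp [hθfun, Equiv.Perm.subtypePerm_apply, map_mul, Equiv.Perm.mul_apply]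
    rfl
  set θ : H →* Equiv.Perm {y : alternatingGroup (Fin p) ⧸ H // y ≠ x₀} :=
    MonoidHom.mk' θfun θmul with hθdef
  have θsign : ∀ h : H, Equiv.Perm.sign (θ h) = 1 := by
    intro h
    have h1 : Equiv.Perm.sign (φ (h : alternatingGroup (Fin p))) = 1 :=
      Equiv.Perm.mem_alternatingGroup.mp (hrange_le ⟨h, rfl⟩)
    have h2 : ∀ y : alternatingGroup (Fin p) ⧸ H, φ (h : alternatingGroup (Fin p)) y ≠ y → y ≠ x₀ := by
      intro y hy hc
      apply hy
      rw [hc]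
      exact (hmemH _).mpr h.2
    calc Equiv.Perm.sign (θ h) = Equiv.Perm.sign (φ (h : alternatingGroup (Fin p))) :=
          Equiv.Perm.sign_subtypePerm _ (fun y => (hfix h y).symm) h2
      _ = 1 := h1
  set θc : H →* alternatingGroup {y : alternatingGroup (Fin p) ⧸ H // y ≠ x₀} :=
    θ.codRestrict _ (fun h => Equiv.Perm.mem_alternatingGroup.mpr (θsign h)) with hθc
  have θcinj : Function.Injective θc := by
    intro a b hab
    have hab' : θ a = θ b := congrArg Subtype.val hab
    apply Subtype.ext
    apply hinj
    ext y
    by_cases hy : y = x₀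
    · rw [hy, (hmemH _).mpr a.2, (hmemH _).mpr b.2]
    · have := congrArg (fun π => (π ⟨y, hy⟩ : {y : alternatingGroup (Fin p) ⧸ H // y ≠ x₀}).val) hab'
      simpa [hθdef, hθfun, Equiv.Perm.subtypePerm_apply] using this
  have θcsurj : Function.Surjective θc := by
    rintro ⟨τ, hτ⟩
    have hτ'A : Equiv.Perm.ofSubtype τ ∈ alternatingGroup (alternatingGroup (Fin p) ⧸ H) := by
      rw [Equiv.Perm.mem_alternatingGroup, Equiv.Perm.sign_ofSubtype]
      exact Equiv.Perm.mem_alternatingGroup.mp hτ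
    rw [← hrange_eq] at hτ'A
    obtain ⟨g, hg⟩ := hτ'A
    have hgfix : φ g x₀ = x₀ := by
      rw [hg]
      exact Equiv.Perm.ofSubtype_apply_of_not_mem τ (by simp)
    have hgH : g ∈ H := (hmemH g).mp hgfix
    refine ⟨⟨g, hgH⟩, ?_⟩
    apply Subtype.ext
    ext y
    have hthis : θfun ⟨g, hgH⟩ y = τ y := by
      apply Subtype.ext
      rw [hθfun]
      simp only [Equiv.Perm.subtypePerm_apply]
      rw [hg]
      exact Equiv.Perm.ofSubtype_apply_coe τ y
    exact congrArg Subtype.val hthis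
  -- perfectness of H
  have hβcard : 5 ≤ Fintype.card {y : alternatingGroup (Fin p) ⧸ H // y ≠ x₀} := by
    have h1 : Fintype.card {y : alternatingGroup (Fin p) ⧸ H // y ≠ x₀}
        = Fintype.card (alternatingGroup (Fin p) ⧸ H) - 1 := by
      have : Fintype.card {y : alternatingGroup (Fin p) ⧸ H // y ≠ x₀}
          = Fintype.card {y : alternatingGroup (Fin p) ⧸ H // ¬ (y = x₀)} := rfl
      rw [this]
      rw [Fintype.card_subtype_compl, Fintype.card_subtype_eq]
    rw [h1, hQcard] at *
    omega
  have hperfH : commutator H = ⊤ := by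
    have h1 : commutator (alternatingGroup {y : alternatingGroup (Fin p) ⧸ H // y ≠ x₀}) = ⊤ :=
      altPerfect hβcard
    have hmap : Subgroup.map θc (commutator H)
        = commutator (alternatingGroup {y : alternatingGroup (Fin p) ⧸ H // y ≠ x₀}) := by
      rw [commutator_def, commutator_def, Subgroup.map_commutator,
        Subgroup.map_top_of_surjective _ θcsurj]
    apply Subgroup.map_injective θcinj
    rw [hmap, h1, Subgroup.map_top_of_surjective _ θcsurj]
  -- final contradiction
  haveI : Fact (N.index).Prime := ⟨hNprime⟩
  have hcyc : IsCyclic (H ⧸ N) := isCyclic_of_prime_card (p := N.index) rfl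
  letI : CommGroup (H ⧸ N) := IsCyclic.commGroup
  have hNtop : N = ⊤ := by
    rw [eq_top_iff, ← hperfH, commutator_def]
    rw [Subgroup.commutator_le]
    intro g₁ _ g₂ _
    rw [← QuotientGroup.eq_one_iff]
    rw [commutatorElement_def]
    simp only [QuotientGroup.mk_mul, QuotientGroup.mk_inv]
    rw [← commutatorElement_def]
    exact commutatorElement_eq_one_iff_mul_comm.mpr (mul_comm _ _)
  rw [hNtop, Subgroup.index_top] at hNprime
  exact Nat.not_prime_one hNprime
end

section
/- Let n ≥ 4 and let F₂ be the field with two elements. Let H be the stabilizer in the general linear group GL(n, F₂) of a fixed nonzero vector v of F₂^n (i.e., H = {A ∈ GL(n, F₂) : A·v = v}). Then H is perfect: H equals its own commutator subgroup. -/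
open Matrix

namespace Stmt18

variable {n : ℕ}

local notation "F" => ZMod 2
local notation "V" n => (Fin n → ZMod 2)
local notation "GLn" n => Matrix.GeneralLinearGroup (Fin n) (ZMod 2)

lemma F_eq_one {x : ZMod 2} (h : x ≠ 0) : x = 1 := by revert h; revert x; decide

lemma mat_add_self (M : Matrix (Fin n) (Fin n) F) : M + M = 0 := by
  ext i j; exact CharTwo.add_self_eq_zero _

lemma vecMulVec_mul_vecMulVec (a b c d : Fin n → F) :
    vecMulVec a b * vecMulVec c d = (b ⬝ᵥ c) • vecMulVec a d := by
  ext i j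
  simp [vecMulVec_apply, mul_apply, dotProduct, Finset.mul_sum, Finset.sum_mul]
  congr 1; ext k; ring

lemma vecMulVec_mulVec (w φ x : Fin n → F) :
    (vecMulVec w φ).mulVec x = (φ ⬝ᵥ x) • w := by
  ext i; simp [vecMulVec_apply, mulVec, dotProduct, Finset.sum_mul, Finset.mul_sum]
  congr 1; ext k; ring

/-- The transvection-like matrix `1 + w φᵀ`. -/
def T (w φ : Fin n → F) : Matrix (Fin n) (Fin n) F := 1 + vecMulVec w φ

lemma T_mul_T (w φ w' φ' : Fin n → F) :
    T w φ * T w' φ' = 1 + vecMulVec w φ + vecMulVec w' φ' + (φ ⬝ᵥ w') • vecMulVec w φ' := by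
  simp only [T, add_mul, mul_add, one_mul, mul_one, vecMulVec_mul_vecMulVec]
  abel

lemma T_sq (w φ : Fin n → F) (h : φ ⬝ᵥ w = 0) : T w φ * T w φ = 1 := by
  rw [T_mul_T, h, zero_smul, add_zero, add_assoc, mat_add_self, add_zero]

/-- The transvection-like matrix as an element of `GL n F₂` (it is an involution). -/
def TU (w φ : Fin n → F) (h : φ ⬝ᵥ w = 0) : GLn n :=
  ⟨T w φ, T w φ, T_sq w φ h, T_sq w φ h⟩

@[simp] lemma TU_val (w φ : Fin n → F) (h : φ ⬝ᵥ w = 0) : (TU w φ h : Matrix (Fin n) (Fin n) F) = T w φ := rfl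

@[simp] lemma TU_inv (w φ : Fin n → F) (h : φ ⬝ᵥ w = 0) : (TU w φ h)⁻¹ = TU w φ h :=
  Units.ext rfl

lemma T_mulVec (w φ x : Fin n → F) : (T w φ).mulVec x = x + (φ ⬝ᵥ x) • w := by
  simp [T, add_mulVec, one_mulVec, vecMulVec_mulVec]

/-- The stabilizer of a vector `v` as a subgroup of `GL n F₂`. -/
def stab (v : Fin n → F) : Subgroup (GLn n) where
  carrier := {A | (A : Matrix (Fin n) (Fin n) F).mulVec v = v}
  one_mem' := by simp
  mul_mem' := by
    intro a b ha hb
    simp only [Set.mem_setOf_eq, Units.val_mul, ← mulVec_mulVec] at *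
    rw [hb, ha]
  inv_mem' := by
    intro a ha
    simp only [Set.mem_setOf_eq] at *
    conv_lhs => rw [← ha]
    rw [mulVec_mulVec, ← Units.val_mul, inv_mul_cancel, Units.val_one, one_mulVec]

lemma mem_stab {v : Fin n → F} {A : GLn n} :
    A ∈ stab v ↔ (A : Matrix (Fin n) (Fin n) F).mulVec v = v := Iff.rfl

lemma TU_mem_stab {v w φ : Fin n → F} (h : φ ⬝ᵥ w = 0) (hv : φ ⬝ᵥ v = 0) :
    TU w φ h ∈ stab v := by
  rw [mem_stab, TU_val, T_mulVec, hv, zero_smul, add_zero]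

/-- The set of transvections stabilizing `v`. -/
def S (v : Fin n → F) : Set (GLn n) :=
  {A | ∃ (w φ : Fin n → F) (h : φ ⬝ᵥ w = 0), φ ⬝ᵥ v = 0 ∧ A = TU w φ h}


lemma mat_two_zsmul (M : Matrix (Fin n) (Fin n) F) : (2 : ℤ) • M = 0 := by
  rw [← Int.cast_smul_eq_zsmul (ZMod 2), show ((2:ℤ) : ZMod 2) = 0 by decide, zero_smul]

lemma mat_three_zsmul (M : Matrix (Fin n) (Fin n) F) : (3 : ℤ) • M = M := by
  rw [← Int.cast_smul_eq_zsmul (ZMod 2), show ((3:ℤ) : ZMod 2) = 1 by decide, one_smul]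

/-- functional from a vector -/
def dotL (φ : Fin n → F) : (Fin n → F) →ₗ[F] F where
  toFun x := φ ⬝ᵥ x
  map_add' x y := by simp [dotProduct_add]
  map_smul' c x := by simp

lemma exists_u (hn : 4 ≤ n) {φ : Fin n → F} (hφ : φ ≠ 0) (w v : Fin n → F) :
    ∃ u, φ ⬝ᵥ u = 0 ∧ u ∉ Submodule.span F ({w, v} : Set (Fin n → F)) := by
  by_contra hcon
  push_neg at hcon
  have hker : LinearMap.ker (dotL φ) ≤ Submodule.span (ZMod 2) ({w, v} : Set (Fin n → F)) := by
    intro x hx; exact hcon x hx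
  have hne : dotL φ ≠ 0 := by
    obtain ⟨j, hj⟩ := Function.ne_iff.1 hφ
    intro h0
    have : dotL φ (Pi.single j 1) = 0 := by rw [h0]; rfl
    simp [dotL, dotProduct_single] at this
    exact hj (by simpa using this)
  have hrange : LinearMap.range (dotL φ) = ⊤ := by
    rcases eq_bot_or_eq_top (LinearMap.range (dotL φ)) with h | h
    · exact absurd (LinearMap.range_eq_bot.1 h) hne
    · exact h
  have h1 : Module.finrank (ZMod 2) (LinearMap.range (dotL φ))
      + Module.finrank (ZMod 2) (LinearMap.ker (dotL φ)) = n := by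
    rw [LinearMap.finrank_range_add_finrank_ker]; simp
  rw [hrange] at h1
  have h2 : Module.finrank (ZMod 2) (LinearMap.ker (dotL φ)) = n - 1 := by
    simp [finrank_top] at h1; omega
  have h3 : Module.finrank (ZMod 2)
      (Submodule.span (ZMod 2) ({w, v} : Set (Fin n → F))) ≤ 2 := by
    refine le_trans (finrank_span_le_card _) ?_
    refine le_trans (Set.toFinset_card _).le ?_
    simp [Set.toFinset_insert]
    exact Finset.card_insert_le _ _
  have := Submodule.finrank_mono hker
  omega

lemma exists_psi {u w v : Fin n → F}
    (h : u ∉ Submodule.span F ({w, v} : Set (Fin n → F))) :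
    ∃ ψ : Fin n → F, ψ ⬝ᵥ u = 1 ∧ ψ ⬝ᵥ w = 0 ∧ ψ ⬝ᵥ v = 0 := by
  obtain ⟨f, hfu, hmap⟩ := Submodule.exists_dual_map_eq_bot_of_notMem h inferInstance
  set ψ : Fin n → F := fun j => f (Pi.single j 1) with hψ
  have hdot : ∀ x, ψ ⬝ᵥ x = f x := by
    intro x
    conv_rhs => rw [← Finset.univ_sum_single x]
    rw [map_sum, dotProduct]
    refine Finset.sum_congr rfl fun j _ => ?_
    have : Pi.single j (x j) = (x j) • (Pi.single j 1 : Fin n → F) := by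
      ext k
      by_cases hk : k = j <;> simp [Pi.single_apply, hk]
    rw [this, _root_.map_smul, smul_eq_mul, mul_comm]
  have hzero : ∀ x ∈ Submodule.span F ({w, v} : Set (Fin n → F)), f x = 0 := by
    intro x hx
    have : f x ∈ Submodule.map f (Submodule.span F ({w, v} : Set (Fin n → F))) :=
      ⟨x, hx, rfl⟩
    rw [hmap] at this
    simpa using this
  refine ⟨ψ, ?_, ?_, ?_⟩
  · rw [hdot]; revert hfu; generalize f u = y; revert y; decide
  · rw [hdot]; exact hzero w (Submodule.subset_span (by simp))
  · rw [hdot]; exact hzero v (Submodule.subset_span (by simp))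

lemma comm_identity {w φ u ψ : Fin n → F} (hψu : ψ ⬝ᵥ u = 1) (hψw : ψ ⬝ᵥ w = 0)
    (h : φ ⬝ᵥ w = 0) (hu0 : φ ⬝ᵥ u = 0) :
    (1 + vecMulVec w ψ) * (1 + vecMulVec u φ) * (1 + vecMulVec w ψ) * (1 + vecMulVec u φ)
      = 1 + vecMulVec w φ := by
  simp only [add_mul, mul_add, one_mul, mul_one, vecMulVec_mul_vecMulVec, smul_mul_assoc,
    mul_smul_comm, hψu, hψw, h, hu0, zero_smul, one_smul, add_zero, zero_add, smul_zero,
    smul_smul, mul_zero, mul_one, zero_mul, Matrix.zero_mul, Matrix.mul_zero]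
  abel_nf
  rw [mat_two_zsmul, mat_two_zsmul, mat_three_zsmul]
  simp

/-- Step A: every generator is a commutator of two elements of the stabilizer. -/
lemma S_subset_commutator (hn : 4 ≤ n) (v : Fin n → F) (hv : v ≠ 0) :
    S v ⊆ ↑⁅stab v, stab v⁆ := by
  rintro A ⟨w, φ, h, hφv, rfl⟩
  by_cases hφ : φ = 0
  · have : TU w φ h = 1 := Units.ext (by subst hφ; simp only [TU, T]; rw [show vecMulVec w (0 : Fin n → F) = 0 by ext i j; simp [vecMulVec_apply]]; simp)
    rw [this]; exact one_mem _
  obtain ⟨u, hu0, hu⟩ := exists_u hn hφ w v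
  obtain ⟨ψ, hψu, hψw, hψv⟩ := exists_psi hu
  have hg : TU w ψ hψw ∈ stab v := TU_mem_stab _ hψv
  have ht : TU u φ hu0 ∈ stab v := TU_mem_stab _ hφv
  have key : TU w φ h = TU w ψ hψw * TU u φ hu0 * (TU w ψ hψw)⁻¹ * (TU u φ hu0)⁻¹ := by
    rw [TU_inv, TU_inv]
    apply Units.ext
    simp only [Units.val_mul, TU_val]
    exact (comm_identity hψu hψw h hu0).symm
  rw [key]
  exact Subgroup.commutator_mem_commutator hg ht

lemma mul_vecMulVec (M : Matrix (Fin n) (Fin n) (ZMod 2)) (w φ : Fin n → ZMod 2) :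
    M * vecMulVec w φ = vecMulVec (M.mulVec w) φ := by
  ext j l
  simp [vecMulVec_apply, mul_apply, mulVec, dotProduct, Finset.sum_mul, mul_assoc]

example (M : Matrix (Fin n) (Fin n) (ZMod 2)) (i j : Fin n) :
    M.mulVec (Pi.single i 1) j = M j i := by
  simp [mulVec_single]

-- equivalence Fin n ≃ {j // j ≠ i} ⊕ Unit
def eqv (i : Fin n) : Fin n ≃ ({j : Fin n // j ≠ i} ⊕ Unit) where
  toFun j := if h : j = i then Sum.inr () else Sum.inl ⟨j, h⟩
  invFun := Sum.elim (fun p => ↑p) (fun _ => i)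
  left_inv j := by by_cases h : j = i <;> simp [h]
  right_inv x := by
    rcases x with ⟨p, hp⟩ | u
    · simp [hp]
    · simp

def Phi (i : Fin n) (X : Matrix {j : Fin n // j ≠ i} {j : Fin n // j ≠ i} (ZMod 2)) :
    Matrix (Fin n) (Fin n) (ZMod 2) :=
  (fromBlocks X 0 0 1).submatrix (eqv i) (eqv i)

lemma Phi_one (i : Fin n) : Phi i 1 = 1 := by
  rw [Phi]
  have : (fromBlocks (1 : Matrix {j : Fin n // j ≠ i} {j : Fin n // j ≠ i} (ZMod 2)) 0 0 (1 : Matrix Unit Unit (ZMod 2))) = 1 := fromBlocks_one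
  rw [this, submatrix_one_equiv]

lemma Phi_mul (i : Fin n) (X Y : Matrix {j : Fin n // j ≠ i} {j : Fin n // j ≠ i} (ZMod 2)) :
    Phi i X * Phi i Y = Phi i (X * Y) := by
  rw [Phi, Phi, submatrix_mul_equiv _ _ _ (eqv i) _, fromBlocks_multiply]
  simp [Phi]

def PhiM (i : Fin n) :
    Matrix {j : Fin n // j ≠ i} {j : Fin n // j ≠ i} (ZMod 2) →* Matrix (Fin n) (Fin n) (ZMod 2) where
  toFun := Phi i
  map_one' := Phi_one i
  map_mul' X Y := (Phi_mul i X Y).symm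

lemma Phi_det (i : Fin n) (X : Matrix {j : Fin n // j ≠ i} {j : Fin n // j ≠ i} (ZMod 2)) :
    (Phi i X).det = X.det := by
  rw [Phi, det_submatrix_equiv_self, det_fromBlocks_zero₂₁]
  simp

lemma Phi_transvection (i : Fin n) (t : TransvectionStruct {j : Fin n // j ≠ i} (ZMod 2)) :
    Phi i t.toMatrix
      = 1 + vecMulVec (Pi.single (t.i : Fin n) t.c : Fin n → ZMod 2)
          (Pi.single (t.j : Fin n) 1 : Fin n → ZMod 2) := by
  ext j k
  rcases t with ⟨a, b, hab, c⟩
  simp only [TransvectionStruct.toMatrix_mk, transvection]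
  by_cases hj : j = i <;> by_cases hk : k = i <;>
    simp [Phi, eqv, hj, hk, fromBlocks, Matrix.add_apply, Matrix.one_apply, vecMulVec_apply,
      Matrix.single, Pi.single_apply]
  · exact fun h _ => absurd h.symm b.prop
  · have h1 : i ≠ k := fun h => hk h.symm
    have h2 : i ≠ (a : Fin n) := fun h => a.prop h.symm
    simp [h1, h2]
  · have h2 : i ≠ (b : Fin n) := fun h => b.prop h.symm
    simp [h2]
  · by_cases h1 : j = (a : Fin n) <;> by_cases h2 : k = (b : Fin n) <;>
      simp [h1, h2, Subtype.ext_iff, eq_comm]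


lemma tu_aux (i : Fin n) (t : TransvectionStruct {j : Fin n // j ≠ i} (ZMod 2)) :
    (Pi.single (t.j : Fin n) 1 : Fin n → F) ⬝ᵥ (Pi.single (t.i : Fin n) t.c : Fin n → F) = 0 := by
  rw [single_dotProduct, Pi.single_apply, if_neg (fun h => t.hij (Subtype.ext h.symm)), mul_zero]

/-- The transvection unit associated to a transvection structure avoiding `i`. -/
def tu (i : Fin n) (t : TransvectionStruct {j : Fin n // j ≠ i} (ZMod 2)) : GLn n :=
  TU (Pi.single (t.i : Fin n) t.c) (Pi.single (t.j : Fin n) 1) (tu_aux i t)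

lemma tu_val (i : Fin n) (t : TransvectionStruct {j : Fin n // j ≠ i} (ZMod 2)) :
    ((tu i t : GLn n) : Matrix (Fin n) (Fin n) F) = Phi i t.toMatrix := by
  rw [Phi_transvection]; rfl

lemma tu_mem_S (i : Fin n) (t : TransvectionStruct {j : Fin n // j ≠ i} (ZMod 2)) :
    tu i t ∈ S (Pi.single i 1) := by
  refine ⟨Pi.single (t.i : Fin n) t.c, Pi.single (t.j : Fin n) 1, tu_aux i t, ?_, rfl⟩
  rw [single_dotProduct, Pi.single_apply, if_neg t.j.prop, mul_zero]

lemma prod_tu_val (i : Fin n) (L : List (TransvectionStruct {j : Fin n // j ≠ i} (ZMod 2))) :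
    (((L.map (tu i)).prod : GLn n) : Matrix (Fin n) (Fin n) F)
      = Phi i (L.map TransvectionStruct.toMatrix).prod := by
  rw [show Phi i (L.map TransvectionStruct.toMatrix).prod
      = PhiM i (L.map TransvectionStruct.toMatrix).prod from rfl, map_list_prod]
  rw [show (((L.map (tu i)).prod : GLn n) : Matrix (Fin n) (Fin n) F)
      = Units.coeHom _ (L.map (tu i)).prod from rfl, map_list_prod]
  rw [List.map_map, List.map_map]
  exact congrArg List.prod (List.map_congr_left fun t _ => tu_val i t)

/-- Step B: the stabilizer of a basis vector is generated by the transvections in it. -/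
lemma stab_le_closure (i : Fin n) :
    stab (Pi.single i 1) ≤ Subgroup.closure (S (Pi.single i 1)) := by
  intro A hA
  rw [mem_stab] at hA
  have hcol : ∀ j, (A : Matrix (Fin n) (Fin n) F) j i = (Pi.single i 1 : Fin n → F) j := by
    intro j
    have := congrFun hA j
    simpa [mulVec_single] using this
  set r : Fin n → F := (fun k => (A : Matrix (Fin n) (Fin n) F) i k) + Pi.single i 1 with hrdef
  have hri : r i = 0 := by
    have : (A : Matrix (Fin n) (Fin n) F) i i = 1 := by rw [hcol i]; simp
    simp [hrdef, this]
    decide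
  have hr : r ⬝ᵥ Pi.single i 1 = 0 := by
    rw [dotProduct_single, mul_one, hri]
  have hRS : TU (Pi.single i 1) r hr ∈ S (Pi.single i 1) := ⟨_, r, hr, hr, rfl⟩
  set uC := A * TU (Pi.single i 1) r hr with huC
  set B : Matrix {j : Fin n // j ≠ i} {j : Fin n // j ≠ i} F :=
    fun p q => (A : Matrix (Fin n) (Fin n) F) p q with hB
  have hCPhi : ((uC : GLn n) : Matrix (Fin n) (Fin n) F) = Phi i B := by
    have h1 : ((uC : GLn n) : Matrix (Fin n) (Fin n) F)
        = (A : Matrix (Fin n) (Fin n) F) + vecMulVec (Pi.single i 1) r := by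
      rw [huC, Units.val_mul, TU_val, T, mul_add, mul_one, mul_vecMulVec, hA]
    rw [h1]
    ext j k
    by_cases hj : j = i <;> by_cases hk : k = i
    · have hAii : (A : Matrix (Fin n) (Fin n) F) i i = 1 := by rw [hcol i]; simp
      simp [Phi, eqv, fromBlocks, vecMulVec_apply, hj, hk, hri, hAii]
    · simp [Phi, eqv, hj, hk, fromBlocks, vecMulVec_apply, hrdef, Pi.single_apply, Ne.symm hk]
      exact CharTwo.add_self_eq_zero _
    · have := hcol j
      simp [Phi, eqv, hj, hk, fromBlocks, vecMulVec_apply, Pi.single_apply, Ne.symm hj, this]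
    · simp [Phi, eqv, hj, hk, fromBlocks, vecMulVec_apply, Pi.single_apply, hj, hB]
  obtain ⟨L, L', D, hLDL⟩ :=
    Pivot.exists_list_transvec_mul_mul_list_transvec_eq_diagonal B
  have hBdet : IsUnit B.det := by
    have h1 : IsUnit ((uC : GLn n) : Matrix (Fin n) (Fin n) F) := ⟨uC, rfl⟩
    rw [hCPhi] at h1
    have := (Matrix.isUnit_iff_isUnit_det _).1 h1
    rwa [Phi_det] at this
  have hdiag : diagonal D = 1 := by
    have hdet : IsUnit (diagonal D).det := by
      rw [← hLDL]
      simp only [det_mul, TransvectionStruct.det_toMatrix_prod, one_mul, mul_one]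
      exact hBdet
    rw [det_diagonal] at hdet
    have hDj : ∀ j, D j = 1 := by
      intro j
      refine F_eq_one fun h0 => ?_
      rw [isUnit_iff_ne_zero] at hdet
      exact hdet (Finset.prod_eq_zero (Finset.mem_univ j) h0)
    have : D = fun _ => 1 := funext hDj
    rw [this]
    exact diagonal_one
  rw [hdiag] at hLDL
  set uL := (L.map (tu i)).prod with huL
  set uL' := (L'.map (tu i)).prod with huL'
  have hkey : uL * uC * uL' = 1 := by
    apply Units.ext
    rw [Units.val_mul, Units.val_mul, prod_tu_val, prod_tu_val, hCPhi, Phi_mul, Phi_mul, hLDL,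
      Phi_one, Units.val_one]
  have huCeq : uC = uL⁻¹ * uL'⁻¹ := by
    have h1 : uL⁻¹ * (uL * uC * uL') * uL'⁻¹ = uL⁻¹ * 1 * uL'⁻¹ := by rw [hkey]
    group at h1
    group
    rw [← h1]
  have hTT : TU (Pi.single i 1) r hr * TU (Pi.single i 1) r hr = 1 :=
    Units.ext (by rw [Units.val_mul, TU_val, T_sq _ _ hr, Units.val_one])
  have hAeq : A = uC * TU (Pi.single i 1) r hr := by
    rw [huC, mul_assoc, hTT, mul_one]
  have hmemL : uL ∈ Subgroup.closure (S (Pi.single i 1)) := by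
    apply Subgroup.list_prod_mem
    intro x hx
    simp only [List.mem_map] at hx
    obtain ⟨t, _, rfl⟩ := hx
    exact Subgroup.subset_closure (tu_mem_S i t)
  have hmemL' : uL' ∈ Subgroup.closure (S (Pi.single i 1)) := by
    apply Subgroup.list_prod_mem
    intro x hx
    simp only [List.mem_map] at hx
    obtain ⟨t, _, rfl⟩ := hx
    exact Subgroup.subset_closure (tu_mem_S i t)
  rw [hAeq, huCeq]
  exact Subgroup.mul_mem _ (Subgroup.mul_mem _ (Subgroup.inv_mem _ hmemL)
    (Subgroup.inv_mem _ hmemL')) (Subgroup.subset_closure hRS)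


lemma stab_le_commutator (hn : 4 ≤ n) (i : Fin n) :
    stab (Pi.single i 1) ≤ ⁅stab (Pi.single i 1), stab (Pi.single i 1)⁆ := by
  intro A hA
  have h1 := stab_le_closure i hA
  have h2 : Subgroup.closure (S (Pi.single i 1)) ≤ ⁅stab (Pi.single i 1), stab (Pi.single i 1)⁆ :=
    (Subgroup.closure_le _).2 (S_subset_commutator hn _ (by
      intro h; have := congrFun h i; simp at this))
  exact h2 h1

end Stmt18

/-- Let `n ≥ 4` and let `H ≤ GL(n, F₂)` be the stabilizer of a fixed nonzero vector `v`
of `F₂ ^ n`. Then `H` is perfect: `H` equals its own commutator subgroup. -/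
theorem stmt_18 (n : ℕ) (hn : 4 ≤ n)
    (v : Fin n → ZMod 2) (hv : v ≠ 0)
    (H : Subgroup (Matrix.GeneralLinearGroup (Fin n) (ZMod 2)))
    (hH : ∀ A : Matrix.GeneralLinearGroup (Fin n) (ZMod 2),
      A ∈ H ↔ (A : Matrix (Fin n) (Fin n) (ZMod 2)).mulVec v = v) :
    commutator H = ⊤ := by
  classical
  open Stmt18 Matrix in
  have hHs : H = Stmt18.stab v := by
    ext A; rw [hH A]; exact Iff.rfl
  obtain ⟨i, hi⟩ : ∃ i, v i ≠ 0 := Function.ne_iff.1 hv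
  have hvi : v i = 1 := Stmt18.F_eq_one hi
  have hPc : (Pi.single i 1 : Fin n → ZMod 2) ⬝ᵥ (v + Pi.single i 1) = 0 := by
    rw [single_dotProduct, one_mul, Pi.add_apply, hvi]
    simp
    decide
  set P := Stmt18.TU (v + Pi.single i 1) (Pi.single i 1) hPc with hP
  have hsq : ∀ x, (P : Matrix (Fin n) (Fin n) (ZMod 2)).mulVec
      ((P : Matrix (Fin n) (Fin n) (ZMod 2)).mulVec x) = x := by
    intro x
    rw [Matrix.mulVec_mulVec, Stmt18.TU_val, Stmt18.T_sq _ _ hPc, Matrix.one_mulVec]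
  have hPe : (P : Matrix (Fin n) (Fin n) (ZMod 2)).mulVec (Pi.single i 1) = v := by
    rw [Stmt18.TU_val, Stmt18.T_mulVec, single_dotProduct, one_mul]
    rw [show (Pi.single i 1 : Fin n → ZMod 2) i = 1 by simp, one_smul]
    ext j
    simp only [Pi.add_apply]
    rw [add_comm, add_assoc, CharTwo.add_self_eq_zero, add_zero]
  have hPv : (P : Matrix (Fin n) (Fin n) (ZMod 2)).mulVec v = Pi.single i 1 := by
    rw [Stmt18.TU_val, Stmt18.T_mulVec, single_dotProduct, one_mul, hvi, one_smul]
    ext j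
    simp only [Pi.add_apply]
    rw [← add_assoc, CharTwo.add_self_eq_zero, zero_add]
  have hmap : Subgroup.map (MulAut.conj P).toMonoidHom (Stmt18.stab (Pi.single i 1))
      = Stmt18.stab v := by
    ext B
    rw [Subgroup.mem_map_equiv]
    have hsymm : (MulAut.conj P).symm B = P⁻¹ * B * P := rfl
    rw [hsymm, Stmt18.TU_inv, Stmt18.mem_stab, Stmt18.mem_stab]
    simp only [Units.val_mul, ← Matrix.mulVec_mulVec]
    rw [hPe]
    constructor
    · intro h
      have := congrArg ((P : Matrix (Fin n) (Fin n) (ZMod 2)).mulVec) h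
      rw [hsq, hPe] at this
      exact this
    · intro h
      rw [h, hPv]
  have h2 : Stmt18.stab v ≤ ⁅Stmt18.stab v, Stmt18.stab v⁆ := by
    rw [← hmap, ← Subgroup.map_commutator]
    exact Subgroup.map_mono (Stmt18.stab_le_commutator hn i)
  subst hHs
  have hinj : Function.Injective (Stmt18.stab v).subtype := Subtype.coe_injective
  apply Subgroup.map_injective hinj
  rw [commutator_def, Subgroup.map_commutator]
  have htop : Subgroup.map (Stmt18.stab v).subtype ⊤ = Stmt18.stab v := by
    conv_rhs => rw [← Subgroup.range_subtype (Stmt18.stab v)]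
    rw [MonoidHom.range_eq_map]
  rw [htop]
  refine le_antisymm ?_ h2
  rw [Subgroup.commutator_le]
  intro g₁ hg₁ g₂ hg₂
  exact Subgroup.mul_mem _ (Subgroup.mul_mem _ (Subgroup.mul_mem _ hg₁ hg₂)
    (Subgroup.inv_mem _ hg₁)) (Subgroup.inv_mem _ hg₂)
end
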